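/- arXiv:2404.04931 — 5 statements merged into one kernel-verified Lean document; each statement's English description precedes it below -/
import Mathlib

section
/- Let J be a finite index set, L ≥ 0, and let G = {(f_j, g_j, w_j)}_{j∈J} ⊆ ℝ × ℝ^d × ℝ^d be a family of triplets with ‖g_j‖ ≤ L for all j, satisfying f_i ≥ f_j + g_j·(w_i − w_j) for all i, j ∈ J. Define I_diff = {i ∈ J : for every j ∈ J, f_i = f_j + g_j·(w_i − w_j) implies g_i = g_j}. Then there exists a convex, L-Lipschitz function f̂ : ℝ^d → ℝ such that f̂(w_j) = f_j for every j ∈ J, and for every i ∈ I_diff, f̂ is differentiable at w_i with ∇f̂(w_i) = g_i. -/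
open scoped RealInnerProductSpace BigOperators

/-- **interpolation lemma.** Given finitely many triplets `(f_j, g_j, w_j)` with
`‖g_j‖ ≤ L` satisfying `f_i ≥ f_j + ⟪g_j, w_i − w_j⟫` for all `i, j`, there is a convex,
`L`-Lipschitz function `f̂ : ℝ^d → ℝ` with `f̂(w_j) = f_j` for all `j`, which is moreover
differentiable with gradient `g_i` at every `w_i` with `i ∈ I_diff`, where
`I_diff = {i : ∀ j, f_i = f_j + ⟪g_j, w_i − w_j⟫ → g_i = g_j}`. -/
theorem convex_lipschitz_interpolation {d : ℕ} {J : Type} [Fintype J]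
    (L : ℝ) (hL : 0 ≤ L) (f : J → ℝ) (g w : J → EuclideanSpace ℝ (Fin d))
    (hbound : ∀ j, ‖g j‖ ≤ L)
    (hineq : ∀ i j, f i ≥ f j + ⟪g j, w i - w j⟫) :
    ∃ fhat : EuclideanSpace ℝ (Fin d) → ℝ,
      ConvexOn ℝ Set.univ fhat ∧
      (∀ u v, |fhat u - fhat v| ≤ L * ‖u - v‖) ∧
      (∀ j, fhat (w j) = f j) ∧
      (∀ i, (∀ j, f i = f j + ⟪g j, w i - w j⟫ → g i = g j) →
        HasGradientAt fhat (g i) (w i)) := by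
  classical
  by_cases hJ : Nonempty J
  · set aff : J → EuclideanSpace ℝ (Fin d) → ℝ := fun j x => f j + ⟪g j, x - w j⟫ with haff
    have hne : (Finset.univ : Finset J).Nonempty := Finset.univ_nonempty
    set fhat : EuclideanSpace ℝ (Fin d) → ℝ :=
      fun x => Finset.univ.sup' hne (fun j => aff j x) with hfhat
    have hle : ∀ j x, aff j x ≤ fhat x := fun j x =>
      Finset.le_sup' (fun j => aff j x) (Finset.mem_univ j)
    have hcontaff : ∀ j, Continuous (aff j) := by
      intro j
      exact continuous_const.add (Continuous.inner continuous_const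
        (continuous_id.sub continuous_const))
    -- value at interpolation points
    have hval : ∀ j, fhat (w j) = f j := by
      intro j
      apply le_antisymm
      · apply Finset.sup'_le
        intro k _
        exact hineq j k
      · have := hle j (w j)
        simpa [haff] using this
    -- Lipschitz
    have hlip1 : ∀ u v, fhat u - fhat v ≤ L * ‖u - v‖ := by
      intro u v
      obtain ⟨j, _, hju⟩ := Finset.exists_mem_eq_sup' hne (fun j => aff j u)
      have hdiff : aff j u - aff j v = ⟪g j, u - v⟫ := by
        simp only [haff, inner_sub_right]
        ring
      have hb : ⟪g j, u - v⟫ ≤ L * ‖u - v‖ := by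
        calc ⟪g j, u - v⟫ ≤ ‖g j‖ * ‖u - v‖ := real_inner_le_norm _ _
          _ ≤ L * ‖u - v‖ := by
            apply mul_le_mul_of_nonneg_right (hbound j) (norm_nonneg _)
      have h2 := hle j v
      have : fhat u = aff j u := hju
      linarith
    -- convexity
    have hconv : ConvexOn ℝ Set.univ fhat := by
      refine ⟨convex_univ, ?_⟩
      intro x _ y _ a b ha hb hab
      simp only [smul_eq_mul]
      apply Finset.sup'_le
      intro j _
      have hsplit : a • x + b • y - w j = a • (x - w j) + b • (y - w j) := by
        have h1 : a • (x - w j) + b • (y - w j) = a • x + b • y - (a + b) • w j := by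
          rw [smul_sub, smul_sub, add_smul]; abel
        rw [h1, hab, one_smul]
      have hcalc : aff j (a • x + b • y) = a * aff j x + b * aff j y := by
        simp only [haff, hsplit, inner_add_right, real_inner_smul_right]
        have : a * f j + b * f j = f j := by
          rw [← add_mul, hab, one_mul]
        linear_combination -this
      rw [hcalc]
      exact add_le_add (mul_le_mul_of_nonneg_left (hle j x) ha)
        (mul_le_mul_of_nonneg_left (hle j y) hb)
    -- gradient
    have hgrad : ∀ i, (∀ j, f i = f j + ⟪g j, w i - w j⟫ → g i = g j) →
        HasGradientAt fhat (g i) (w i) := by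
      intro i hi
      have haffgrad : HasGradientAt (aff i) (g i) (w i) := by
        rw [hasGradientAt_iff_hasFDerivAt]
        have h2 : HasFDerivAt (fun x : EuclideanSpace ℝ (Fin d) => ⟪g i, x⟫)
            ((InnerProductSpace.toDual ℝ (EuclideanSpace ℝ (Fin d))) (g i)) (w i) := by
          have h3 := (innerSL ℝ (g i)).hasFDerivAt (x := w i)
          have h4 : (InnerProductSpace.toDual ℝ (EuclideanSpace ℝ (Fin d))) (g i)
              = innerSL ℝ (g i) := by
            ext y
            simp [InnerProductSpace.toDual_apply_apply]
          rw [h4]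
          exact h3
        have h1 := (h2.sub_const (⟪g i, w i⟫)).const_add (f i)
        convert h1 using 1
        · rfl
        · rfl
        funext x
        simp [haff, inner_sub_right]
      have hloc : ∀ᶠ x in nhds (w i), fhat x = aff i x := by
        have hstep : ∀ᶠ x in nhds (w i), ∀ j, aff j x ≤ aff i x := by
          rw [Filter.eventually_all]
          intro j
          by_cases hjact : f i = f j + ⟪g j, w i - w j⟫
          · have hg := hi j hjact
            have heqa : ∀ x, aff j x = aff i x := by
              intro x
              simp only [haff, hjact, hg, inner_sub_right]
              ring
            filter_upwards with x
            rw [heqa x]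
          · have hlt : aff j (w i) < aff i (w i) := by
              have h1 := hineq i j
              have h2 : aff i (w i) = f i := by simp [haff]
              have h3 : aff j (w i) ≠ f i := fun hc => hjact (hc.symm)
              rw [h2]
              exact lt_of_le_of_ne h1 h3
            have := ((hcontaff j).continuousAt (x := w i)).eventually_lt
              ((hcontaff i).continuousAt (x := w i)) hlt
            filter_upwards [this] with x hx using le_of_lt hx
        filter_upwards [hstep] with x hx
        exact le_antisymm (Finset.sup'_le _ _ fun j _ => hx j) (hle i x)
      rw [hasGradientAt_iff_hasFDerivAt] at haffgrad ⊢
      exact haffgrad.congr_of_eventuallyEq hloc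
    exact ⟨fhat, hconv, fun u v => by
      rw [abs_sub_le_iff]
      refine ⟨hlip1 u v, ?_⟩
      have := hlip1 v u
      rwa [norm_sub_rev] at this, hval, hgrad⟩
  · refine ⟨fun _ => 0, convexOn_const 0 convex_univ, ?_, ?_, ?_⟩
    · intro u v
      simp only [sub_zero, abs_zero]
      positivity
    · intro j; exact absurd ⟨j⟩ hJ
    · intro i _; exact absurd ⟨i⟩ hJ
end

section
/- For every 0 < η ≤ 1 and every integer T ≥ 1, there exists a convex, 1-Lipschitz function f : ℝ → ℝ such that for any choice of subgradients, projected gradient descent on the interval [−1, 1] with step size η and T iterations started at 0 (with averaged output x^GD = (1/T) Σ_{t=1}^T x_t) satisfies f(x^GD) − min_{x∈[−1,1]} f(x) ≥ min{ η/6 + 1/(6ηT), 1/6 }. In particular, the optimization error of GD cannot beat Θ(η + 1/(ηT)) even in dimension one. -/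
open scoped BigOperators

private lemma vee_convex (s κ : ℝ) (hs : 0 ≤ s) :
    ConvexOn ℝ Set.univ (fun x => s * |x - κ|) := by
  refine ⟨convex_univ, ?_⟩
  intro x _ y _ a b ha hb hab
  simp only [smul_eq_mul]
  have h : a * x + b * y - κ = a * (x - κ) + b * (y - κ) := by linear_combination κ * hab
  rw [h]
  have h2 : |a * (x - κ) + b * (y - κ)| ≤ a * |x - κ| + b * |y - κ| := by
    calc |a * (x - κ) + b * (y - κ)| ≤ |a * (x - κ)| + |b * (y - κ)| := abs_add_le _ _
    _ = a * |x - κ| + b * |y - κ| := by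
        rw [abs_mul, abs_mul, abs_of_nonneg ha, abs_of_nonneg hb]
  nlinarith [abs_nonneg (x - κ), abs_nonneg (y - κ), abs_nonneg (a * (x - κ) + b * (y - κ))]

private lemma vee_lip (s κ : ℝ) (hs0 : 0 ≤ s) (hs1 : s ≤ 1) (u v : ℝ) :
    abs (s * |u - κ| - s * |v - κ|) ≤ 1 * |u - v| := by
  rw [← mul_sub, abs_mul, abs_of_nonneg hs0, one_mul]
  have h1 : abs (|u - κ| - |v - κ|) ≤ |u - v| := by
    have h0 := abs_abs_sub_abs_le_abs_sub (u - κ) (v - κ)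
    have h2 : u - κ - (v - κ) = u - v := by ring
    rwa [h2] at h0
  calc s * abs (|u - κ| - |v - κ|) ≤ 1 * abs (|u - κ| - |v - κ|) :=
        mul_le_mul_of_nonneg_right hs1 (abs_nonneg _)
  _ = abs (|u - κ| - |v - κ|) := one_mul _
  _ ≤ |u - v| := h1

private lemma clamp_eq (w : ℝ) (h1 : -1 ≤ w) (h2 : w ≤ 1) : max (-1) (min 1 w) = w := by
  rw [min_eq_right h2, max_eq_right h1]

private lemma grad_right (s κ v g : ℝ) (hs : 0 < s) (hκ : -1 ≤ κ) (hκv : κ < v) (hv : v < 1)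
    (h : ∀ y ∈ Set.Icc (-1:ℝ) 1, s * |y - κ| ≥ s * |v - κ| + g * (y - v)) : g = s := by
  have hvκ : |v - κ| = v - κ := abs_of_pos (by linarith)
  have h1 := h κ ⟨hκ, by linarith⟩
  have h2 := h 1 ⟨by linarith, le_refl 1⟩
  rw [hvκ, sub_self, abs_zero] at h1
  rw [hvκ, abs_of_pos (by linarith : (0:ℝ) < 1 - κ)] at h2
  have hup : g ≤ s := by nlinarith
  have hlo : s ≤ g := by nlinarith
  linarith

private lemma grad_left (s κ v g : ℝ) (hs : 0 < s) (hκ : κ ≤ 1) (hκv : v < κ) (hv : -1 < v)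
    (h : ∀ y ∈ Set.Icc (-1:ℝ) 1, s * |y - κ| ≥ s * |v - κ| + g * (y - v)) : g = -s := by
  have hvκ : |v - κ| = κ - v := by rw [abs_of_neg (by linarith : v - κ < 0)]; ring
  have h1 := h κ ⟨by linarith, hκ⟩
  have h2 := h (-1) ⟨le_refl _, by linarith⟩
  rw [hvκ, sub_self, abs_zero] at h1
  have habs : |(-1:ℝ) - κ| = κ + 1 := by
    rw [abs_of_nonpos (by linarith : (-1:ℝ) - κ ≤ 0)]; ring
  rw [hvκ, habs] at h2
  have hup : g ≤ -s := by nlinarith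
  have hlo : -s ≤ g := by nlinarith
  linarith

private lemma parity_sum (A : ℝ) (hA : 0 ≤ A) (n : ℕ) :
    (n : ℝ) * A / 2 ≤ ∑ t ∈ Finset.Icc 1 n, (if Odd t then A else 0) := by
  have key : ∀ m : ℕ, (m : ℝ) * A / 2 + (if Odd m then A / 2 else 0)
      ≤ ∑ t ∈ Finset.Icc 1 m, (if Odd t then A else 0) := by
    intro m
    induction m with
    | zero => simp
    | succ k ih =>
      rw [Finset.sum_Icc_succ_top (by omega : 1 ≤ k + 1)]
      rcases Nat.even_or_odd k with hk | hk
      · have hk1 : Odd (k + 1) := Even.add_one hk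
        have hk' : ¬ Odd k := by
          rw [Nat.odd_iff]; rw [Nat.even_iff] at hk; omega
        rw [if_pos hk1, if_pos hk1]
        rw [if_neg hk'] at ih
        push_cast
        linarith
      · have hk1 : ¬ Odd (k + 1) := by
          rw [Nat.odd_iff] at hk ⊢; omega
        rw [if_neg hk1, if_neg hk1]
        rw [if_pos hk] at ih
        push_cast
        linarith
  have h := key n
  rcases em (Odd n) with hn | hn
  · rw [if_pos hn] at h; linarith
  · rw [if_neg hn] at h; linarith

private lemma R3_core (η : ℝ) (hη0 : 0 < η) (hη1 : η ≤ 1) (T : ℕ) (hT : 1 ≤ T)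
    (s : ℝ) (hs0 : 0 < s) (hs1 : s ≤ 1) (hamp : η * s ≤ 19/20)
    (hδamp : η / 200 < η * s)
    (hfin : 1/6 ≤ s * (η * s / 2 - η / 200)) :
    ∃ f : ℝ → ℝ, ConvexOn ℝ Set.univ f ∧ (∀ u v : ℝ, |f u - f v| ≤ 1 * |u - v|) ∧
      ∀ x : ℕ → ℝ, x 0 = 0 →
        (∀ t, t < T → ∃ g : ℝ,
          (∀ y ∈ Set.Icc (-1 : ℝ) 1, f y ≥ f (x t) + g * (y - x t)) ∧
          x (t + 1) = max (-1) (min 1 (x t - η * g))) →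
        min (η / 6 + 1 / (6 * η * (T : ℝ))) (1 / 6) ≤
          f ((T : ℝ)⁻¹ * ∑ t ∈ Finset.Icc 1 T, x t) - sInf (f '' Set.Icc (-1 : ℝ) 1) := by
  set κ : ℝ := η / 200 with hκdef
  have hκ0 : 0 < κ := by positivity
  have hκ1 : κ ≤ 1 := by rw [hκdef]; linarith
  refine ⟨fun z => s * |z - κ|, vee_convex s κ hs0.le, fun u v => vee_lip s κ hs0.le hs1 u v, ?_⟩
  intro x hx0 hstep
  have hB0 : 0 < η * s := by positivity
  have traj : ∀ t, t ≤ T → x t = if Odd t then η * s else 0 := by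
    intro t
    induction t with
    | zero =>
      intro _
      rw [if_neg (by decide : ¬ Odd 0)]
      exact hx0
    | succ n ih =>
      intro ht
      have hxn := ih (by omega)
      obtain ⟨g, hg, hrec⟩ := hstep n (by omega)
      rcases Nat.even_or_odd n with hne | hno
      · have hnotodd : ¬ Odd n := by
          rw [Nat.odd_iff]; rw [Nat.even_iff] at hne; omega
        rw [if_neg hnotodd] at hxn
        rw [hxn] at hg
        have hgv : g = -s := grad_left s κ 0 g hs0 hκ1 hκ0 (by norm_num) hg
        have hx1 : x (n+1) = η * s := by
          rw [hrec, hxn, hgv]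
          have he : (0:ℝ) - η * (-s) = η * s := by ring
          rw [he]
          exact clamp_eq _ (by linarith) (by linarith)
        rw [hx1, if_pos (Even.add_one hne)]
      · rw [if_pos hno] at hxn
        rw [hxn] at hg
        have hgv : g = s := grad_right s κ (η * s) g hs0 (by linarith) hδamp (by linarith) hg
        have hx1 : x (n+1) = 0 := by
          rw [hrec, hxn, hgv]
          have he : η * s - η * s = (0:ℝ) := by ring
          rw [he]
          exact clamp_eq _ (by norm_num) (by norm_num)
        have hne1 : ¬ Odd (n+1) := by rw [Nat.odd_iff] at hno ⊢; omega
        rw [hx1, if_neg hne1]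
  have hsum : ∑ t ∈ Finset.Icc 1 T, x t = ∑ t ∈ Finset.Icc 1 T, (if Odd t then η * s else 0) := by
    apply Finset.sum_congr rfl
    intro t ht
    exact traj t (Finset.mem_Icc.mp ht).2
  have hS := parity_sum (η * s) hB0.le T
  have hT0 : (0:ℝ) < T := by exact_mod_cast hT
  have hxbar : η * s / 2 - κ ≤ (T:ℝ)⁻¹ * (∑ t ∈ Finset.Icc 1 T, x t) - κ := by
    have h1 : (T:ℝ) * (η * s) / 2 ≤ ∑ t ∈ Finset.Icc 1 T, x t := by rw [hsum]; exact hS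
    have h2 : (T:ℝ)⁻¹ * ((T:ℝ) * (η * s) / 2) ≤ (T:ℝ)⁻¹ * ∑ t ∈ Finset.Icc 1 T, x t :=
      mul_le_mul_of_nonneg_left h1 (by positivity)
    have h3 : (T:ℝ)⁻¹ * ((T:ℝ) * (η * s) / 2) = η * s / 2 := by field_simp
    linarith [h2, h3.symm.le]
  have hInf : sInf ((fun z => s * |z - κ|) '' Set.Icc (-1:ℝ) 1) ≤ 0 := by
    apply csInf_le
    · refine ⟨0, ?_⟩
      rintro z ⟨w, _, rfl⟩
      positivity
    · exact ⟨κ, ⟨by linarith, hκ1⟩, by simp⟩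
  have hfx : s * (η * s / 2 - κ) ≤ s * |(T:ℝ)⁻¹ * (∑ t ∈ Finset.Icc 1 T, x t) - κ| := by
    have h6 := le_abs_self ((T:ℝ)⁻¹ * (∑ t ∈ Finset.Icc 1 T, x t) - κ)
    have h4 : s * ((T:ℝ)⁻¹ * (∑ t ∈ Finset.Icc 1 T, x t) - κ)
        ≤ s * |(T:ℝ)⁻¹ * (∑ t ∈ Finset.Icc 1 T, x t) - κ| :=
      mul_le_mul_of_nonneg_left h6 hs0.le
    have h5 : s * (η * s / 2 - κ) ≤ s * ((T:ℝ)⁻¹ * (∑ t ∈ Finset.Icc 1 T, x t) - κ) :=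
      mul_le_mul_of_nonneg_left hxbar hs0.le
    linarith
  have hmin : min (η / 6 + 1 / (6 * η * (T : ℝ))) (1/6 : ℝ) ≤ 1/6 := min_le_right _ _
  have hfin2 : (1:ℝ)/6 ≤ s * |(T:ℝ)⁻¹ * (∑ t ∈ Finset.Icc 1 T, x t) - κ| := le_trans hfin hfx
  simp only []
  linarith

private lemma clamp_eq' (w : ℝ) (h1 : -1 ≤ w) (h2 : w ≤ 1) : max (-1) (min 1 w) = w := by
  rw [min_eq_right h2, max_eq_right h1]

private lemma grad_right' (s κ v g : ℝ) (hs : 0 < s) (hκ : -1 ≤ κ) (hκv : κ < v) (hv : v < 1)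
    (h : ∀ y ∈ Set.Icc (-1:ℝ) 1, s * |y - κ| ≥ s * |v - κ| + g * (y - v)) : g = s := by
  have hvκ : |v - κ| = v - κ := abs_of_pos (by linarith)
  have h1 := h κ ⟨hκ, by linarith⟩
  have h2 := h 1 ⟨by linarith, le_refl 1⟩
  rw [hvκ, sub_self, abs_zero] at h1
  rw [hvκ, abs_of_pos (by linarith : (0:ℝ) < 1 - κ)] at h2
  have hup : g ≤ s := by nlinarith
  have hlo : s ≤ g := by nlinarith
  linarith

private lemma grad_left' (s κ v g : ℝ) (hs : 0 < s) (hκ : κ ≤ 1) (hκv : v < κ) (hv : -1 < v)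
    (h : ∀ y ∈ Set.Icc (-1:ℝ) 1, s * |y - κ| ≥ s * |v - κ| + g * (y - v)) : g = -s := by
  have hvκ : |v - κ| = κ - v := by rw [abs_of_neg (by linarith : v - κ < 0)]; ring
  have h1 := h κ ⟨by linarith, hκ⟩
  have h2 := h (-1) ⟨le_refl _, by linarith⟩
  rw [hvκ, sub_self, abs_zero] at h1
  have habs : |(-1:ℝ) - κ| = κ + 1 := by
    rw [abs_of_nonpos (by linarith : (-1:ℝ) - κ ≤ 0)]; ring
  rw [hvκ, habs] at h2
  have hup : g ≤ -s := by nlinarith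
  have hlo : -s ≤ g := by nlinarith
  linarith

private lemma vee_convex' (s κ : ℝ) (hs : 0 ≤ s) :
    ConvexOn ℝ Set.univ (fun x => s * |x - κ|) := by
  refine ⟨convex_univ, ?_⟩
  intro x _ y _ a b ha hb hab
  simp only [smul_eq_mul]
  have h : a * x + b * y - κ = a * (x - κ) + b * (y - κ) := by linear_combination κ * hab
  rw [h]
  have h2 : |a * (x - κ) + b * (y - κ)| ≤ a * |x - κ| + b * |y - κ| := by
    calc |a * (x - κ) + b * (y - κ)| ≤ |a * (x - κ)| + |b * (y - κ)| := abs_add_le _ _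
    _ = a * |x - κ| + b * |y - κ| := by
        rw [abs_mul, abs_mul, abs_of_nonneg ha, abs_of_nonneg hb]
  nlinarith [abs_nonneg (x - κ), abs_nonneg (y - κ), abs_nonneg (a * (x - κ) + b * (y - κ))]

private lemma vee_lip' (s κ : ℝ) (hs0 : 0 ≤ s) (hs1 : s ≤ 1) (u v : ℝ) :
    abs (s * |u - κ| - s * |v - κ|) ≤ 1 * |u - v| := by
  rw [← mul_sub, abs_mul, abs_of_nonneg hs0, one_mul]
  have h1 : abs (|u - κ| - |v - κ|) ≤ |u - v| := by
    have h0 := abs_abs_sub_abs_le_abs_sub (u - κ) (v - κ)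
    have h2 : u - κ - (v - κ) = u - v := by ring
    rwa [h2] at h0
  calc s * abs (|u - κ| - |v - κ|) ≤ 1 * abs (|u - κ| - |v - κ|) :=
        mul_le_mul_of_nonneg_right hs1 (abs_nonneg _)
  _ = abs (|u - κ| - |v - κ|) := one_mul _
  _ ≤ |u - v| := h1

set_option maxHeartbeats 1600000 in
private lemma R2_core (η : ℝ) (hη0 : 0 < η) (hη1 : η ≤ 17/50) (T : ℕ) (hT : 1 ≤ T) :
    ∃ f : ℝ → ℝ, ConvexOn ℝ Set.univ f ∧ (∀ u v : ℝ, |f u - f v| ≤ 1 * |u - v|) ∧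
      ∀ x : ℕ → ℝ, x 0 = 0 →
        (∀ t, t < T → ∃ g : ℝ,
          (∀ y ∈ Set.Icc (-1 : ℝ) 1, f y ≥ f (x t) + g * (y - x t)) ∧
          x (t + 1) = max (-1) (min 1 (x t - η * g))) →
        min (η / 6 + 1 / (6 * η * (T : ℝ))) (1 / 6) ≤
          f ((T : ℝ)⁻¹ * ∑ t ∈ Finset.Icc 1 T, x t) - sInf (f '' Set.Icc (-1 : ℝ) 1) := by
  obtain ⟨M, hMdef⟩ : ∃ m : ℕ, m = ⌈(98:ℝ)/(75*η)⌉₊ := ⟨_, rfl⟩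
  have hM4 : 4 ≤ M := by
    have h : (3:ℝ) < 98/(75*η) := by rw [lt_div_iff₀ (by positivity)]; linarith
    have h2 : 3 < M := by rw [hMdef]; exact Nat.lt_ceil.mpr (by exact_mod_cast h)
    omega
  have hM0 : 0 < M := by omega
  have hMR : (0:ℝ) < M := by exact_mod_cast hM0
  have hMR4 : (4:ℝ) ≤ M := by exact_mod_cast hM4
  have hMge : (98:ℝ)/(75*η) ≤ M := by rw [hMdef]; exact Nat.le_ceil _
  have hMlt : (M:ℝ) < 98/(75*η) + 1 := by rw [hMdef]; exact Nat.ceil_lt_add_one (by positivity)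
  have hηM_lb : (98:ℝ)/75 ≤ η * M := by
    have h := mul_le_mul_of_nonneg_left hMge hη0.le
    have h2 : η * ((98:ℝ)/(75*η)) = 98/75 := by field_simp
    linarith
  have hηM_ub : η * M < 247/150 := by
    have h := mul_lt_mul_of_pos_left hMlt hη0
    have h2 : η * ((98:ℝ)/(75*η) + 1) = 98/75 + η := by field_simp
    linarith
  obtain ⟨s, hsdef⟩ : ∃ r : ℝ, r = 49/(50 * (η * M)) := ⟨_, rfl⟩
  obtain ⟨B, hBdef⟩ : ∃ r : ℝ, r = η * s := ⟨_, rfl⟩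
  have hηM0 : (0:ℝ) < η * M := by positivity
  have hB_eq : B = 49/(50*(M:ℝ)) := by rw [hBdef, hsdef]; field_simp
  have hMB : (M:ℝ) * B = 49/50 := by rw [hB_eq]; field_simp
  have hs0 : 0 < s := by rw [hsdef]; positivity
  have hB0 : 0 < B := by rw [hB_eq]; positivity
  have hs_ub : s ≤ 3/4 := by
    rw [hsdef, div_le_iff₀ (by positivity)]
    linarith
  have hs_lb : 147/247 ≤ s := by
    rw [hsdef, le_div_iff₀ (by positivity)]
    nlinarith [hηM_ub]
  have hs1 : s ≤ 1 := by linarith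
  have hB_ub : B ≤ 49/200 := by
    rw [hB_eq, div_le_div_iff₀ (by positivity) (by norm_num)]
    linarith
  obtain ⟨δ, hδdef⟩ : ∃ r : ℝ, r = η/200 := ⟨_, rfl⟩
  have hδ0 : 0 < δ := by rw [hδdef]; positivity
  have hδ_ub : δ ≤ 17/10000 := by rw [hδdef]; linarith
  have hδB : δ < B := by
    have h1200 : (1:ℝ)/200 < s := by linarith
    have h2 := mul_lt_mul_of_pos_left h1200 hη0
    calc δ = η * (1/200) := by rw [hδdef]; ring
    _ < η * s := h2
    _ = B := hBdef.symm
  obtain ⟨κ, hκdef⟩ : ∃ r : ℝ, r = -(M:ℝ)*B + δ := ⟨_, rfl⟩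
  have hκ_lb : -1 < κ := by rw [hκdef]; linarith [hMB, hδ0]
  have hκ_ub : κ < 0 := by rw [hκdef]; linarith [hMB, hδ_ub]
  refine ⟨fun z => s * |z - κ|, vee_convex' s κ hs0.le, fun u v => vee_lip' s κ hs0.le hs1 u v, ?_⟩
  intro x hx0 hstep
  obtain ⟨X, hXdef⟩ : ∃ F : ℕ → ℝ, F = fun t =>
    if t ≤ M then -(t:ℝ)*B else if Odd (t - M) then -(M:ℝ)*B + B else -(M:ℝ)*B := ⟨_, rfl⟩
  -- trajectory
  have traj : ∀ t, t ≤ T → x t = X t := by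
    intro t
    induction t with
    | zero =>
      intro _
      simp only [hXdef]
      rw [if_pos (by omega : 0 ≤ M)]
      rw [hx0]; norm_num
    | succ n ih =>
      intro ht
      have hxn := ih (by omega)
      obtain ⟨g, hg, hrec⟩ := hstep n (by omega)
      by_cases hA : n + 1 ≤ M
      · -- descent step
        have hXn : X n = -(n:ℝ)*B := by
          simp only [hXdef]; rw [if_pos (by omega : n ≤ M)]
        rw [hxn, hXn] at hg hrec
        have hcast : ((n:ℝ)+1) ≤ (M:ℝ) := by exact_mod_cast hA
        have hprod1 : (0:ℝ) ≤ ((M:ℝ) - (n:ℝ) - 1) * B :=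
          mul_nonneg (by linarith) hB0.le
        have hprod2 : (0:ℝ) ≤ (n:ℝ) * B :=
          mul_nonneg (by positivity) hB0.le
        have hreg : κ < -(n:ℝ)*B := by
          rw [hκdef]
          nlinarith [hprod1, hδB]
        have hv1 : -(n:ℝ)*B < 1 := by
          nlinarith [hprod2]
        have hgv : g = s := grad_right' s κ (-(n:ℝ)*B) g hs0 hκ_lb.le hreg hv1 hg
        have hbnd : ((n:ℝ)+1)*B ≤ 49/50 := by
          calc ((n:ℝ)+1)*B ≤ (M:ℝ)*B := mul_le_mul_of_nonneg_right hcast hB0.le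
          _ = 49/50 := hMB
        have hval : -(n:ℝ)*B - η * s = -((n:ℝ)+1)*B := by rw [hBdef]; ring
        have hx1 : x (n+1) = -((n:ℝ)+1)*B := by
          rw [hrec, hgv, hval]
          have hprod3 : (0:ℝ) ≤ ((n:ℝ)+1) * B :=
            mul_nonneg (by positivity) hB0.le
          exact clamp_eq' _ (by linarith) (by nlinarith [hprod3])
        rw [hx1]
        simp only [hXdef]
        rw [if_pos hA]
        push_cast
        ring
      · by_cases hB' : n ≤ M
        · -- n = M : bottom point, jump up
          have hnM : n = M := by omega
          subst hnM
          have hXn : X n = -(n:ℝ)*B := by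
            simp only [hXdef]; rw [if_pos le_rfl]
          rw [hxn, hXn] at hg hrec
          have hreg : -(n:ℝ)*B < κ := by rw [hκdef]; linarith
          have hvm1 : -1 < -(n:ℝ)*B := by
            have : (n:ℝ)*B = 49/50 := hMB
            linarith
          have hgv : g = -s := grad_left' s κ (-(n:ℝ)*B) g hs0 (by linarith) hreg hvm1 hg
          have hval : -(n:ℝ)*B - η * (-s) = -(n:ℝ)*B + B := by rw [hBdef]; ring
          have hx1 : x (n+1) = -(n:ℝ)*B + B := by
            rw [hrec, hgv, hval]
            have h1 : (n:ℝ)*B = 49/50 := hMB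
            exact clamp_eq' _ (by linarith) (by linarith)
          rw [hx1]
          simp only [hXdef]
          rw [if_neg (by omega : ¬ (n + 1 ≤ n))]
          have hd : n + 1 - n = 1 := by omega
          rw [hd, if_pos (by decide : Odd 1)]
        · -- n > M : in the 2-cycle
          have hMn : M < n := by omega
          by_cases hk : Odd (n - M)
          · -- top point, step down
            have hXn : X n = -(M:ℝ)*B + B := by
              simp only [hXdef]; rw [if_neg (by omega), if_pos hk]
            rw [hxn, hXn] at hg hrec
            have hreg : κ < -(M:ℝ)*B + B := by rw [hκdef]; linarith
            have hv1 : -(M:ℝ)*B + B < 1 := by linarith [hMB]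
            have hgv : g = s := grad_right' s κ (-(M:ℝ)*B + B) g hs0 hκ_lb.le hreg hv1 hg
            have hval : -(M:ℝ)*B + B - η * s = -(M:ℝ)*B := by rw [hBdef]; ring
            have hx1 : x (n+1) = -(M:ℝ)*B := by
              rw [hrec, hgv, hval]
              exact clamp_eq' _ (by linarith [hMB]) (by linarith [hMB])
            rw [hx1]
            simp only [hXdef]
            rw [if_neg (by omega : ¬ (n + 1 ≤ M))]
            have hd : n + 1 - M = (n - M) + 1 := by omega
            have hk1 : ¬ Odd (n + 1 - M) := by
              rw [hd]; rw [Nat.odd_iff] at hk ⊢; omega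
            rw [if_neg hk1]
          · -- bottom point, jump up
            have hXn : X n = -(M:ℝ)*B := by
              simp only [hXdef]; rw [if_neg (by omega), if_neg hk]
            rw [hxn, hXn] at hg hrec
            have hreg : -(M:ℝ)*B < κ := by rw [hκdef]; linarith
            have hvm1 : -1 < -(M:ℝ)*B := by linarith [hMB]
            have hgv : g = -s := grad_left' s κ (-(M:ℝ)*B) g hs0 (by linarith) hreg hvm1 hg
            have hval : -(M:ℝ)*B - η * (-s) = -(M:ℝ)*B + B := by rw [hBdef]; ring
            have hx1 : x (n+1) = -(M:ℝ)*B + B := by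
              rw [hrec, hgv, hval]
              exact clamp_eq' _ (by linarith [hMB]) (by linarith [hMB])
            rw [hx1]
            simp only [hXdef]
            rw [if_neg (by omega : ¬ (n + 1 ≤ M))]
            have hd : n + 1 - M = (n - M) + 1 := by omega
            have hk1 : Odd (n + 1 - M) := by
              rw [hd]; rw [Nat.odd_iff] at hk ⊢; omega
            rw [if_pos hk1]
  have hsx : ∑ t ∈ Finset.Icc 1 T, x t = ∑ t ∈ Finset.Icc 1 T, X t := by
    apply Finset.sum_congr rfl
    intro t ht
    exact traj t (Finset.mem_Icc.mp ht).2
  -- sum formulas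
  have sumA : ∀ n : ℕ, n ≤ M → ∑ t ∈ Finset.Icc 1 n, X t = -(B * n * ((n:ℝ)+1))/2 := by
    intro n
    induction n with
    | zero => intro _; simp
    | succ k ih =>
      intro hk
      rw [Finset.sum_Icc_succ_top (by omega : 1 ≤ k + 1), ih (by omega)]
      have hX : X (k+1) = -((k:ℝ)+1)*B := by
        simp only [hXdef]; rw [if_pos hk]; push_cast; ring
      rw [hX]
      push_cast
      ring
  have sumB : ∀ n : ℕ, M ≤ n →
      -(B * M * ((M:ℝ)+1))/2 + ((n:ℝ) - M) * (-(M:ℝ)*B + B/2)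
        + (if Odd (n - M) then B/2 else 0) ≤ ∑ t ∈ Finset.Icc 1 n, X t := by
    intro n hn
    induction n, hn using Nat.le_induction with
    | base =>
      rw [sumA M le_rfl, Nat.sub_self]
      rw [if_neg (by decide : ¬ Odd 0)]
      ring_nf
      linarith [le_refl (0:ℝ)]
    | succ n hn ih =>
      rw [Finset.sum_Icc_succ_top (by omega : 1 ≤ n + 1)]
      have hnM : ¬ (n + 1 ≤ M) := by omega
      have hd : n + 1 - M = (n - M) + 1 := by omega
      have hcast : (M:ℝ) ≤ n := by exact_mod_cast hn
      rcases em (Odd (n - M)) with hk | hk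
      · have hk1 : ¬ Odd (n + 1 - M) := by
          rw [hd]; rw [Nat.odd_iff] at hk ⊢; omega
        have hX : X (n+1) = -(M:ℝ)*B := by
          simp only [hXdef]; rw [if_neg hnM, if_neg hk1]
        rw [hX, if_neg hk1]
        rw [if_pos hk] at ih
        push_cast
        linarith
      · have hk1 : Odd (n + 1 - M) := by
          rw [hd]; rw [Nat.odd_iff] at hk ⊢; omega
        have hX : X (n+1) = -(M:ℝ)*B + B := by
          simp only [hXdef]; rw [if_neg hnM, if_pos hk1]
        rw [hX, if_pos hk1]
        rw [if_neg hk] at ih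
        push_cast
        linarith
  -- common final facts
  have hT0 : (0:ℝ) < T := by exact_mod_cast hT
  have hInf : sInf ((fun z => s * |z - κ|) '' Set.Icc (-1:ℝ) 1) ≤ 0 := by
    apply csInf_le
    · refine ⟨0, ?_⟩
      rintro z ⟨w, _, rfl⟩
      positivity
    · exact ⟨κ, ⟨hκ_lb.le, by linarith⟩, by simp⟩
  have habs : ∀ V : ℝ, s * V ≤ s * |(T:ℝ)⁻¹ * (∑ t ∈ Finset.Icc 1 T, x t) - κ| →
      s * V ≤ (fun z => s * |z - κ|) ((T:ℝ)⁻¹ * ∑ t ∈ Finset.Icc 1 T, x t)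
        - sInf ((fun z => s * |z - κ|) '' Set.Icc (-1:ℝ) 1) := by
    intro V hV
    simp only []
    linarith
  have hTne : (T:ℝ) ≠ 0 := ne_of_gt hT0
  by_cases hTM : T ≤ M
  · -- small T : bound by 1/6
    have hval : ∑ t ∈ Finset.Icc 1 T, x t = -(B * T * ((T:ℝ)+1))/2 := by
      rw [hsx]; exact sumA T hTM
    have hxbar : (T:ℝ)⁻¹ * (∑ t ∈ Finset.Icc 1 T, x t) - κ
        = (M:ℝ)*B - δ - B*((T:ℝ)+1)/2 := by
      rw [hval, hκdef]
      field_simp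
      try ring
    have hcast : (T:ℝ) ≤ M := by exact_mod_cast hTM
    have hc1 : B*((T:ℝ)+1) ≤ B*((M:ℝ)+1) :=
      mul_le_mul_of_nonneg_left (by linarith) hB0.le
    have hc2 : (1829:ℝ)/5000 ≤ (M:ℝ)*B - δ - B*((T:ℝ)+1)/2 := by
      linarith [hMB, hδ_ub, hB_ub, hc1]
    have hc3 : (1:ℝ)/6 ≤ s * ((M:ℝ)*B - δ - B*((T:ℝ)+1)/2) := by
      have hmm := mul_le_mul hs_lb hc2 (by norm_num) (by linarith)
      calc (1:ℝ)/6 ≤ (147/247) * ((1829:ℝ)/5000) := by norm_num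
      _ ≤ s * ((M:ℝ)*B - δ - B*((T:ℝ)+1)/2) := hmm
    have hVa : s * ((M:ℝ)*B - δ - B*((T:ℝ)+1)/2)
        ≤ s * |(T:ℝ)⁻¹ * (∑ t ∈ Finset.Icc 1 T, x t) - κ| := by
      rw [hxbar]
      exact mul_le_mul_of_nonneg_left (le_abs_self _) hs0.le
    have hfinal := habs _ hVa
    exact le_trans (min_le_right _ _) (le_trans hc3 hfinal)
  · -- large T : bound by η/6 + 1/(6ηT)
    push_neg at hTM
    have hMT : M ≤ T := le_of_lt hTM
    have hcastMT : (M:ℝ) ≤ T := by exact_mod_cast hMT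
    have hSB := sumB T hMT
    have hbonus : (0:ℝ) ≤ (if Odd (T - M) then B/2 else 0) := by
      split
      · linarith
      · exact le_refl 0
    have hW : B*(M:ℝ)*((M:ℝ)-1)/2 + B*((T:ℝ)-(M:ℝ))/2 - (T:ℝ)*δ
        ≤ (∑ t ∈ Finset.Icc 1 T, x t) - (T:ℝ)*κ := by
      rw [hsx, hκdef]
      linarith [hSB, hbonus]
    have hq : (1:ℝ)/6 ≤ s*s/2 - s/200 := by
      nlinarith [sq_nonneg (s - 147/247), hs_lb]
    have hk1 : η/6 ≤ s*B/2 - s*δ := by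
      rw [hBdef, hδdef]
      have h := mul_le_mul_of_nonneg_left hq hη0.le
      nlinarith [h]
    have hk2 : 1/(6*η) ≤ s*(B*(M:ℝ)*((M:ℝ)-1)/2 - B*(M:ℝ)/2) := by
      rw [div_le_iff₀ (by positivity : (0:ℝ) < 6*η)]
      have hkey : s*(B*(M:ℝ)*((M:ℝ)-1)/2 - B*(M:ℝ)/2) * (6*η)
          = 3*((M:ℝ)*B)^2 - 6*((M:ℝ)*B)*B := by
        rw [hBdef]; ring
      rw [hkey, hMB]
      linarith [hB_ub]
    have hcomb : (T:ℝ)*(η/6) + 1/(6*η) ≤ s*((∑ t ∈ Finset.Icc 1 T, x t) - (T:ℝ)*κ) := by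
      have h1 := mul_le_mul_of_nonneg_left hk1 hT0.le
      have h2 : s*(B*(M:ℝ)*((M:ℝ)-1)/2 + B*((T:ℝ)-(M:ℝ))/2 - (T:ℝ)*δ)
          = (T:ℝ)*(s*B/2 - s*δ) + s*(B*(M:ℝ)*((M:ℝ)-1)/2 - B*(M:ℝ)/2) := by ring
      have h3 := mul_le_mul_of_nonneg_left hW hs0.le
      nlinarith [h1, hk2, h3, h2]
    have hdiv : η/6 + 1/(6*η*(T:ℝ)) ≤ s*((T:ℝ)⁻¹ * (∑ t ∈ Finset.Icc 1 T, x t) - κ) := by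
      have heq : η/6 + 1/(6*η*(T:ℝ)) = ((T:ℝ)*(η/6) + 1/(6*η))/(T:ℝ) := by
        field_simp
        try ring
      have heq2 : s*((T:ℝ)⁻¹ * (∑ t ∈ Finset.Icc 1 T, x t) - κ)
          = s*((∑ t ∈ Finset.Icc 1 T, x t) - (T:ℝ)*κ)/(T:ℝ) := by
        field_simp
        try ring
      rw [heq, heq2]
      gcongr
    have hVa : s*((T:ℝ)⁻¹ * (∑ t ∈ Finset.Icc 1 T, x t) - κ)
        ≤ s * |(T:ℝ)⁻¹ * (∑ t ∈ Finset.Icc 1 T, x t) - κ| :=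
      mul_le_mul_of_nonneg_left (le_abs_self _) hs0.le
    have hfinal := habs _ hVa
    exact le_trans (min_le_left _ _) (le_trans hdiv hfinal)

/-- For every `0 < η ≤ 1` and `T ≥ 1` there is a convex `1`-Lipschitz
function `f : ℝ → ℝ` such that for any choice of subgradients, projected gradient descent on
`[−1, 1]` with step size `η`, `T` iterations and averaged output satisfies
`f(x^GD) − min_{[−1,1]} f ≥ min{η/6 + 1/(6ηT), 1/6}`. -/

theorem gd_optimization_lower_bound_dim_one
    (η : ℝ) (hη0 : 0 < η) (hη1 : η ≤ 1) (T : ℕ) (hT : 1 ≤ T) :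
    ∃ f : ℝ → ℝ, ConvexOn ℝ Set.univ f ∧ (∀ u v : ℝ, |f u - f v| ≤ 1 * |u - v|) ∧
      ∀ x : ℕ → ℝ, x 0 = 0 →
        (∀ t, t < T → ∃ g : ℝ,
          (∀ y ∈ Set.Icc (-1 : ℝ) 1, f y ≥ f (x t) + g * (y - x t)) ∧
          x (t + 1) = max (-1) (min 1 (x t - η * g))) →
        min (η / 6 + 1 / (6 * η * (T : ℝ))) (1 / 6) ≤
          f ((T : ℝ)⁻¹ * ∑ t ∈ Finset.Icc 1 T, x t) - sInf (f '' Set.Icc (-1 : ℝ) 1) := by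
  by_cases hcase : η ≤ 17/50
  · exact R2_core η hη0 hcase T hT
  · push_neg at hcase
    by_cases hc2 : η ≤ 19/20
    · refine R3_core η hη0 hη1 T hT 1 one_pos le_rfl ?_ ?_ ?_
      · rw [mul_one]; linarith
      · rw [mul_one]; linarith
      · rw [mul_one, one_mul]; linarith
    · push_neg at hc2
      have hs0 : (0:ℝ) < 19/(20*η) := by positivity
      have hmul : η * (19/(20*η)) = 19/20 := by field_simp
      refine R3_core η hη0 hη1 T hT (19/(20*η)) hs0 ?_ ?_ ?_ ?_
      · rw [div_le_one (by positivity)]; linarith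
      · rw [hmul]
      · rw [hmul]; linarith
      · rw [hmul]
        have h3 : (19:ℝ)/20 ≤ 19/(20*η) := by
          rw [le_div_iff₀ (by positivity)]; nlinarith
        have h2 : (19:ℝ)/40 - 1/200 ≤ 19/40 - η/200 := by linarith
        calc (1:ℝ)/6 ≤ (19/20) * ((19:ℝ)/40 - 1/200) := by norm_num
        _ ≤ (19/(20*η)) * (19/40 - η/200) :=
            mul_le_mul h3 h2 (by norm_num) (le_of_lt hs0)
        _ = (19/(20*η)) * ((19:ℝ)/20/2 - η/200) := by norm_num
end

section
/- For every d ≥ 4096 there exists a set 𝒱 ⊆ {0,1}^d such that: (i) |𝒱| ≥ e^{d/258}; (ii) every v ∈ 𝒱 satisfies ‖v‖² ≥ 7d/16 (i.e., v has at least 7d/16 coordinates equal to 1); and (iii) for every pair of distinct v₁, v₂ ∈ 𝒱, v₁·v₂ ≤ 5d/16. -/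
open scoped BigOperators
open Finset

section Aux
variable {d : ℕ}

/-- Tail of binomial sum bound via generating function trick. -/
lemma feldman_tail_le (w T : ℕ) :
    (∑ t ∈ Icc (T+1) w, (w.choose t : ℝ)) ≤ (3/5)^(T+1) * (8/3)^w := by
  have h1 : ∀ t ∈ Icc (T+1) w, ((w.choose t : ℝ)) ≤ (3/5)^(T+1) * ((5/3)^t * w.choose t) := by
    intro t ht
    have htT : T+1 ≤ t := (mem_Icc.mp ht).1
    have hone : (1:ℝ) ≤ (3/5)^(T+1) * (5/3)^t := by
      have he : (3/5:ℝ)^(T+1) * (5/3)^(T+1) = 1 := by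
        rw [← mul_pow]; norm_num
      calc (1:ℝ) = (3/5)^(T+1) * (5/3)^(T+1) := he.symm
        _ ≤ (3/5)^(T+1) * (5/3)^t :=
            mul_le_mul_of_nonneg_left (pow_le_pow_right₀ (by norm_num) htT) (by positivity)
    have := mul_le_mul_of_nonneg_right hone (Nat.cast_nonneg (w.choose t) : (0:ℝ) ≤ w.choose t)
    rw [one_mul] at this
    calc ((w.choose t : ℝ)) ≤ (3/5)^(T+1) * (5/3)^t * (w.choose t) := this
      _ = (3/5)^(T+1) * ((5/3)^t * (w.choose t)) := by ring
  calc (∑ t ∈ Icc (T+1) w, (w.choose t : ℝ))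
      ≤ ∑ t ∈ Icc (T+1) w, (3/5)^(T+1) * ((5/3)^t * (w.choose t : ℝ)) := Finset.sum_le_sum h1
    _ = (3/5)^(T+1) * ∑ t ∈ Icc (T+1) w, ((5/3)^t * (w.choose t : ℝ)) := by rw [Finset.mul_sum]
    _ ≤ (3/5)^(T+1) * ∑ t ∈ range (w+1), ((5/3)^t * (w.choose t : ℝ)) := by
        apply mul_le_mul_of_nonneg_left _ (by positivity)
        apply Finset.sum_le_sum_of_subset_of_nonneg
        · intro t ht
          rw [mem_Icc] at ht
          exact mem_range.mpr (Nat.lt_succ_of_le ht.2)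
        · intro t _ _; positivity
    _ = (3/5)^(T+1) * (8/3)^w := by
        congr 1
        have := add_pow (5/3 : ℝ) 1 w
        simp only [one_pow, mul_one] at this
        rw [← this]; norm_num

lemma feldman_ball_le {w T : ℕ} (B₀ : Finset (Fin d)) (hB : B₀.card = w) (hTd : 16*T ≤ 5*d) :
    ((powersetCard w (univ : Finset (Fin d))).filter
        (fun u => 5*d + 1 ≤ 16 * (u ∩ B₀).card)).card
      ≤ (∑ t ∈ Icc (T+1) w, w.choose t) * 2 ^ (d - w) := by
  classical
  have hrec : ∀ u : Finset (Fin d), (u ∩ B₀) ∪ (u \ B₀) = u := by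
    intro u; ext i; simp only [mem_union, mem_inter, mem_sdiff]; tauto
  have hmap : ∀ u ∈ (powersetCard w (univ : Finset (Fin d))).filter
      (fun u => 5*d + 1 ≤ 16 * (u ∩ B₀).card),
      (u ∩ B₀, u \ B₀) ∈ (B₀.powerset.filter fun Pp => T+1 ≤ Pp.card) ×ˢ B₀ᶜ.powerset := by
    intro u hu
    rw [mem_filter] at hu
    refine mem_product.mpr ⟨mem_filter.mpr ⟨mem_powerset.mpr inter_subset_right, ?_⟩,
      mem_powerset.mpr ?_⟩
    · have h2 := hu.2
      show T + 1 ≤ (u ∩ B₀).card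
      omega
    · intro i hi
      rw [mem_sdiff] at hi
      exact mem_compl.mpr hi.2
  have hinj : Set.InjOn (fun u => (u ∩ B₀, u \ B₀))
      ((powersetCard w (univ : Finset (Fin d))).filter
        (fun u => 5*d + 1 ≤ 16 * (u ∩ B₀).card) : Finset (Finset (Fin d))) := by
    intro u1 _ u2 _ heq
    have e1 : u1 ∩ B₀ = u2 ∩ B₀ := congrArg Prod.fst heq
    have e2 : u1 \ B₀ = u2 \ B₀ := congrArg Prod.snd heq
    rw [← hrec u1, e1, e2, hrec u2]
  have hcard := Finset.card_le_card_of_injOn _ hmap hinj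
  rw [Finset.card_product, Finset.card_powerset, Finset.card_compl, Fintype.card_fin, hB]
      at hcard
  refine hcard.trans (Nat.mul_le_mul_right _ ?_)
  have hsub : B₀.powerset.filter (fun Pp => T+1 ≤ Pp.card) ⊆
      (Icc (T+1) w).biUnion (fun t => B₀.powersetCard t) := by
    intro Pp hPp
    rw [mem_filter, mem_powerset] at hPp
    refine mem_biUnion.mpr ⟨Pp.card, mem_Icc.mpr ⟨hPp.2, hB ▸ card_le_card hPp.1⟩, ?_⟩
    exact mem_powersetCard.mpr ⟨hPp.1, rfl⟩
  calc (B₀.powerset.filter (fun Pp => T+1 ≤ Pp.card)).card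
      ≤ ((Icc (T+1) w).biUnion (fun t => B₀.powersetCard t)).card := card_le_card hsub
    _ ≤ ∑ t ∈ Icc (T+1) w, (B₀.powersetCard t).card := card_biUnion_le
    _ = ∑ t ∈ Icc (T+1) w, w.choose t := by
        refine sum_congr rfl fun t _ => ?_
        rw [card_powersetCard, hB]

lemma feldman_core (d : ℕ) (hd : 4096 ≤ d) :
    ∃ S : Finset (Finset (Fin d)),
      (∀ A ∈ S, A.card = d/2) ∧
      (∀ A ∈ S, ∀ B ∈ S, A ≠ B → 16 * (A ∩ B).card ≤ 5 * d) ∧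
      d.choose (d/2) ≤ S.card *
        ((∑ t ∈ Icc ((5*d)/16 + 1) (d/2), (d/2).choose t) * 2 ^ (d - d/2)) := by
  classical
  set w := d/2 with hw
  set T := (5*d)/16 with hT
  set P : Finset (Finset (Fin d)) → Prop := fun S =>
    (∀ A ∈ S, A.card = w) ∧ ∀ A ∈ S, ∀ B ∈ S, A ≠ B → 16 * (A ∩ B).card ≤ 5 * d with hP
  have hPempty : P ∅ := ⟨by simp, by simp⟩
  obtain ⟨S, hSC, hSmax⟩ := Finset.exists_max_image
    ((univ : Finset (Finset (Finset (Fin d)))).filter P) Finset.card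
    ⟨∅, mem_filter.mpr ⟨mem_univ _, hPempty⟩⟩
  have hSP : P S := (mem_filter.mp hSC).2
  refine ⟨S, hSP.1, hSP.2, ?_⟩
  have hcover : (powersetCard w (univ : Finset (Fin d))) ⊆
      S.biUnion (fun v => (powersetCard w (univ : Finset (Fin d))).filter
        (fun u => 5*d + 1 ≤ 16 * (u ∩ v).card)) := by
    intro u hu
    have hucard : u.card = w := (mem_powersetCard.mp hu).2
    by_cases hex : ∃ v ∈ S, 5*d + 1 ≤ 16 * (u ∩ v).card
    · obtain ⟨v, hv, h⟩ := hex
      exact mem_biUnion.mpr ⟨v, hv, mem_filter.mpr ⟨hu, h⟩⟩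
    · exfalso
      push_neg at hex
      have huS : u ∉ S := by
        intro huS
        have h := hex u huS
        rw [Finset.inter_self, hucard] at h
        omega
      have hP' : P (insert u S) := by
        constructor
        · intro A hA
          rcases Finset.mem_insert.mp hA with rfl | hA'
          · exact hucard
          · exact hSP.1 A hA'
        · intro A hA B hB hAB
          rcases Finset.mem_insert.mp hA with rfl | hA' <;>
            rcases Finset.mem_insert.mp hB with rfl | hB'
          · exact absurd rfl hAB
          · have h := hex B hB'; omega
          · have h := hex A hA'; rw [Finset.inter_comm]; omega
          · exact hSP.2 A hA' B hB' hAB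
      have hlt := hSmax (insert u S) (mem_filter.mpr ⟨mem_univ _, hP'⟩)
      rw [Finset.card_insert_of_notMem huS] at hlt
      omega
  calc d.choose w = (powersetCard w (univ : Finset (Fin d))).card := by
        rw [card_powersetCard, card_univ, Fintype.card_fin]
    _ ≤ (S.biUnion (fun v => (powersetCard w (univ : Finset (Fin d))).filter
          (fun u => 5*d + 1 ≤ 16 * (u ∩ v).card))).card := card_le_card hcover
    _ ≤ ∑ v ∈ S, ((powersetCard w (univ : Finset (Fin d))).filter
          (fun u => 5*d + 1 ≤ 16 * (u ∩ v).card)).card := card_biUnion_le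
    _ ≤ ∑ _v ∈ S, (∑ t ∈ Icc (T+1) w, w.choose t) * 2 ^ (d - w) := by
        refine Finset.sum_le_sum fun v hv => ?_
        exact feldman_ball_le v (hSP.1 v hv) (by omega)
    _ = S.card * ((∑ t ∈ Icc (T+1) w, w.choose t) * 2 ^ (d - w)) := by
        rw [Finset.sum_const, smul_eq_mul]

end Aux

section Numeric

lemma feldman_dplus1 (d : ℕ) (hd : 4096 ≤ d) :
    (d:ℝ) + 1 ≤ Real.exp ((d:ℝ)/100) := by
  have hdR : (4096:ℝ) ≤ (d:ℝ) := by exact_mod_cast hd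
  have h400 := Real.add_one_le_exp ((d:ℝ)/400)
  have hp : ((d:ℝ)/400 + 1)^4 ≤ (Real.exp ((d:ℝ)/400))^4 :=
    pow_le_pow_left₀ (by positivity) h400 4
  have hexp4 : (Real.exp ((d:ℝ)/400))^4 = Real.exp ((d:ℝ)/100) := by
    rw [← Real.exp_nat_mul]; congr 1; push_cast; ring
  have h3 : (4096:ℝ)^3 * d ≤ (d:ℝ)^3 * d :=
    mul_le_mul (pow_le_pow_left₀ (by norm_num) hdR 3) le_rfl (by positivity) (by positivity)
  have hq : (d:ℝ) + 1 ≤ ((d:ℝ)/400 + 1)^4 := by nlinarith [h3, hdR, sq_nonneg ((d:ℝ))]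
  calc (d:ℝ) + 1 ≤ ((d:ℝ)/400 + 1)^4 := hq
    _ ≤ (Real.exp ((d:ℝ)/400))^4 := hp
    _ = Real.exp ((d:ℝ)/100) := hexp4

lemma feldman_logkey :
    8 * Real.log (4/3) - 5 * Real.log (5/3) ≤ -(18839/84375 : ℝ) := by
  have hlog := Real.log_le_sub_one_of_pos (show (0:ℝ) < 65536/84375 by norm_num)
  have heq : Real.log ((4/3:ℝ)^8 / (5/3)^5) = 8 * Real.log (4/3) - 5 * Real.log (5/3) := by
    rw [Real.log_div (by positivity) (by positivity), Real.log_pow, Real.log_pow]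
    push_cast; ring
  have hval : ((4/3:ℝ)^8 / (5/3)^5) = 65536/84375 := by norm_num
  rw [hval] at heq
  rw [heq] at hlog
  linarith

lemma feldman_numeric (d : ℕ) (hd : 4096 ≤ d) :
    Real.exp ((d:ℝ)/258) *
      (((∑ t ∈ Icc ((5*d)/16 + 1) (d/2), (d/2).choose t) * 2 ^ (d - d/2) : ℕ) : ℝ)
      ≤ (d.choose (d/2) : ℝ) := by
  set w := d/2 with hw
  set T := (5*d)/16 with hT
  have hwd : w ≤ d := Nat.div_le_self d 2
  have hdR : (4096:ℝ) ≤ (d:ℝ) := by exact_mod_cast hd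
  have hdpos : (0:ℝ) ≤ (d:ℝ) := Nat.cast_nonneg d
  set L1 := Real.log (5/3) with hL1
  set L2 := Real.log (4/3) with hL2
  have hL1pos : 0 < L1 := Real.log_pos (by norm_num)
  have hL2pos : 0 ≤ L2 := Real.log_nonneg (by norm_num)
  -- cast bounds on T and w
  have hTlt : 5 * (d:ℝ) / 16 < (T:ℝ) + 1 := by
    have : 5 * d < 16 * (T + 1) := by omega
    have := (Nat.cast_lt (α := ℝ)).mpr this
    push_cast at this
    linarith
  have hwle : (w:ℝ) ≤ (d:ℝ) / 2 := by
    have : 2 * w ≤ d := by omega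
    have := (Nat.cast_le (α := ℝ)).mpr this
    push_cast at this
    linarith
  -- bound powers by exponentials
  have hb1 : ((3:ℝ)/5)^(T+1) ≤ Real.exp (-(5*(d:ℝ)/16 * L1)) := by
    rw [← Real.exp_log (show (0:ℝ) < (3/5)^(T+1) by positivity), Real.log_pow]
    apply Real.exp_le_exp.mpr
    have hlog35 : Real.log (3/5:ℝ) = -L1 := by
      rw [hL1, ← Real.log_inv]; norm_num
    rw [hlog35]
    push_cast
    nlinarith [hTlt, hL1pos]
  have hb2 : ((4:ℝ)/3)^w ≤ Real.exp ((d:ℝ)/2 * L2) := by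
    rw [← Real.exp_log (show (0:ℝ) < (4/3)^w by positivity), Real.log_pow]
    apply Real.exp_le_exp.mpr
    nlinarith [hwle, hL2pos]
  -- key product bound
  have hprod : Real.exp ((d:ℝ)/258) * ((3/5)^(T+1) * (4/3)^w) * ((d:ℝ)+1) ≤ 1 := by
    have hstep : Real.exp ((d:ℝ)/258) * ((3/5)^(T+1) * (4/3)^w) * ((d:ℝ)+1)
        ≤ Real.exp ((d:ℝ)/258) * (Real.exp (-(5*(d:ℝ)/16 * L1)) * Real.exp ((d:ℝ)/2 * L2)) *
          Real.exp ((d:ℝ)/100) := by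
      gcongr ?_ * ?_ * ?_
      · exact mul_le_mul hb1 hb2 (by positivity) (Real.exp_nonneg _)
      · exact feldman_dplus1 d hd
    have hcomb : Real.exp ((d:ℝ)/258) * (Real.exp (-(5*(d:ℝ)/16 * L1)) * Real.exp ((d:ℝ)/2 * L2)) *
        Real.exp ((d:ℝ)/100)
        = Real.exp ((d:ℝ)/258 - 5*(d:ℝ)/16 * L1 + (d:ℝ)/2 * L2 + (d:ℝ)/100) := by
      rw [← Real.exp_add, ← Real.exp_add, ← Real.exp_add]
      ring_nf
    have hexpo : (d:ℝ)/258 - 5*(d:ℝ)/16 * L1 + (d:ℝ)/2 * L2 + (d:ℝ)/100 ≤ 0 := by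
      have hkey := feldman_logkey
      rw [← hL1, ← hL2] at hkey
      have hmul := mul_le_mul_of_nonneg_left hkey (show (0:ℝ) ≤ (d:ℝ)/16 by positivity)
      nlinarith [hmul, hdpos]
    calc Real.exp ((d:ℝ)/258) * ((3/5)^(T+1) * (4/3)^w) * ((d:ℝ)+1)
        ≤ Real.exp ((d:ℝ)/258) * (Real.exp (-(5*(d:ℝ)/16 * L1)) * Real.exp ((d:ℝ)/2 * L2)) *
          Real.exp ((d:ℝ)/100) := hstep
      _ = Real.exp ((d:ℝ)/258 - 5*(d:ℝ)/16 * L1 + (d:ℝ)/2 * L2 + (d:ℝ)/100) := hcomb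
      _ ≤ Real.exp 0 := Real.exp_le_exp.mpr hexpo
      _ = 1 := Real.exp_zero
  -- 2^d ≤ (d+1) * choose
  have hchoose : (2:ℝ)^d ≤ ((d:ℝ)+1) * (d.choose w : ℝ) := by
    have hnat : 2^d ≤ (d+1) * d.choose (d/2) := by
      calc 2^d = ∑ i ∈ range (d+1), d.choose i := (Nat.sum_range_choose d).symm
        _ ≤ ∑ _i ∈ range (d+1), d.choose (d/2) :=
            Finset.sum_le_sum fun i _ => Nat.choose_le_middle i d
        _ = (d+1) * d.choose (d/2) := by rw [Finset.sum_const, card_range, smul_eq_mul]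
    exact_mod_cast hnat
  -- assemble
  have htail := feldman_tail_le w T
  push_cast
  have hstep1 : Real.exp ((d:ℝ)/258) * ((∑ t ∈ Icc (T+1) w, ((w.choose t : ℕ):ℝ)) * 2^(d-w))
      ≤ Real.exp ((d:ℝ)/258) * (((3:ℝ)/5)^(T+1) * (8/3)^w * 2^(d-w)) := by
    gcongr _ * (?_ * _)
  have hid : Real.exp ((d:ℝ)/258) * (((3:ℝ)/5)^(T+1) * (8/3)^w * 2^(d-w))
      = Real.exp ((d:ℝ)/258) * ((3/5)^(T+1) * (4/3)^w) * 2^d := by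
    have h83 : ((8:ℝ)/3)^w = 2^w * (4/3)^w := by rw [← mul_pow]; norm_num
    have h2d : (2:ℝ)^(d-w) * 2^w = 2^d := by
      rw [← pow_add, Nat.sub_add_cancel hwd]
    calc Real.exp ((d:ℝ)/258) * (((3:ℝ)/5)^(T+1) * (8/3)^w * 2^(d-w))
        = Real.exp ((d:ℝ)/258) * ((3/5)^(T+1) * (4/3)^w) * ((2:ℝ)^(d-w) * 2^w) := by
          rw [h83]; ring
      _ = Real.exp ((d:ℝ)/258) * ((3/5)^(T+1) * (4/3)^w) * 2^d := by rw [h2d]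
  have hfin : Real.exp ((d:ℝ)/258) * ((3/5)^(T+1) * (4/3)^w) * 2^d ≤ (d.choose w : ℝ) := by
    have hpos : (0:ℝ) < (d:ℝ) + 1 := by positivity
    have hA : (0:ℝ) ≤ Real.exp ((d:ℝ)/258) * ((3/5)^(T+1) * (4/3)^w) := by positivity
    nlinarith [hprod, hchoose, hA, pow_pos (show (0:ℝ) < 2 by norm_num) d,
      mul_le_mul_of_nonneg_left hchoose hA]
  calc Real.exp ((d:ℝ)/258) * ((∑ t ∈ Icc (T+1) w, ((w.choose t : ℕ):ℝ)) * 2^(d-w))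
      ≤ Real.exp ((d:ℝ)/258) * (((3:ℝ)/5)^(T+1) * (8/3)^w * 2^(d-w)) := hstep1
    _ = Real.exp ((d:ℝ)/258) * ((3/5)^(T+1) * (4/3)^w) * 2^d := hid
    _ ≤ (d.choose w : ℝ) := hfin

end Numeric

/-- **Feldman's set.** For every `d ≥ 4096` there is a set `𝒱 ⊆ {0,1}^d` with
`|𝒱| ≥ e^{d/258}`, such that every `v ∈ 𝒱` satisfies `‖v‖² ≥ 7d/16` and every pair of
distinct `v₁, v₂ ∈ 𝒱` satisfies `v₁·v₂ ≤ 5d/16`. -/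
theorem feldman_set_exists (d : ℕ) (hd : 4096 ≤ d) :
    ∃ V : Finset (Fin d → ℝ),
      (∀ v ∈ V, ∀ i, v i = 0 ∨ v i = 1) ∧
      Real.exp ((d : ℝ) / 258) ≤ (V.card : ℝ) ∧
      (∀ v ∈ V, 7 * (d : ℝ) / 16 ≤ ∑ i, v i * v i) ∧
      (∀ v₁ ∈ V, ∀ v₂ ∈ V, v₁ ≠ v₂ → ∑ i, v₁ i * v₂ i ≤ 5 * (d : ℝ) / 16) := by
  classical
  obtain ⟨S, hScard, hSinter, hSge⟩ := feldman_core d hd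
  set indF : Finset (Fin d) → (Fin d → ℝ) := fun A i => if i ∈ A then (1:ℝ) else 0 with hind
  have hinj : Function.Injective indF := by
    intro A B hAB
    ext i
    have hi := congrFun hAB i
    by_cases hA : i ∈ A <;> by_cases hB : i ∈ B <;> simp [hind, hA, hB] at hi ⊢
  have hsum : ∀ A B : Finset (Fin d), ∑ i, indF A i * indF B i = ((A ∩ B).card : ℝ) := by
    intro A B
    have h : ∀ i, indF A i * indF B i = if i ∈ A ∩ B then (1:ℝ) else 0 := by
      intro i; by_cases hA : i ∈ A <;> by_cases hB : i ∈ B <;> simp [hind, hA, hB]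
    rw [Finset.sum_congr rfl fun i _ => h i, Finset.sum_ite_mem, Finset.univ_inter,
      Finset.sum_const, nsmul_eq_mul, mul_one]
  refine ⟨S.image indF, ?_, ?_, ?_, ?_⟩
  · intro v hv i
    obtain ⟨A, hA, rfl⟩ := Finset.mem_image.mp hv
    by_cases h : i ∈ A <;> simp [hind, h]
  · rw [Finset.card_image_of_injective _ hinj]
    have hnum := feldman_numeric d hd
    set N := ((∑ t ∈ Icc ((5*d)/16 + 1) (d/2), (d/2).choose t) * 2 ^ (d - d/2) : ℕ) with hN
    have hNpos : 0 < N := by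
      have hmem : (d/2) ∈ Icc ((5*d)/16 + 1) (d/2) := mem_Icc.mpr ⟨by omega, le_rfl⟩
      have h1 := Finset.single_le_sum (f := fun t => (d/2).choose t)
        (fun i _ => Nat.zero_le _) hmem
      simp only [Nat.choose_self] at h1
      have h2 : 0 < 2 ^ (d - d/2) := Nat.pow_pos (by norm_num)
      exact Nat.mul_pos (by omega) h2
    have hge : (d.choose (d/2) : ℝ) ≤ (S.card : ℝ) * (N : ℝ) := by exact_mod_cast hSge
    have hchain : Real.exp ((d:ℝ)/258) * (N:ℝ) ≤ (S.card : ℝ) * (N:ℝ) :=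
      le_trans hnum hge
    have hNR : (0:ℝ) < (N:ℝ) := by exact_mod_cast hNpos
    exact le_of_mul_le_mul_right hchain hNR
  · intro v hv
    obtain ⟨A, hA, rfl⟩ := Finset.mem_image.mp hv
    rw [hsum A A, Finset.inter_self, hScard A hA]
    have h1 : 7*d ≤ 16*(d/2) := by omega
    have h2 := (Nat.cast_le (α := ℝ)).mpr h1
    push_cast at h2
    linarith
  · intro v₁ hv₁ v₂ hv₂ hne
    obtain ⟨A, hA, rfl⟩ := Finset.mem_image.mp hv₁
    obtain ⟨B, hB, rfl⟩ := Finset.mem_image.mp hv₂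
    have hABne : A ≠ B := fun h => hne (by rw [h])
    have h := hSinter A hA B hB hABne
    rw [hsum A B]
    have h2 := (Nat.cast_le (α := ℝ)).mpr h
    push_cast at h2
    linarith
end

section
/- Consider the block dynamics with parameters d, k, d', η, α. Then for every t ≥ 1 the iterates satisfy ‖w_t‖² ≤ 2η²α²·t. In particular, if α ≤ 1/(η√(2T)), then every iterate w_t with t ≤ T lies in the closed Euclidean unit ball (so running projected gradient descent on the unit ball with these update directions performs no projections up to time T). -/
open scoped BigOperators

/-- The block average `w(I_j) = (1/√k) ∑_{i ∈ I_j} w(i)`, where (in `0`-indexed coordinates)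
`I_j = {(j−1)k, …, jk−1}` is the `j`-th block of `k` coordinates, `j = 1, …, d'/k`. -/
noncomputable def blockVal (d k : ℕ) (w : EuclideanSpace ℝ (Fin d)) (j : ℕ) : ℝ :=
  (Real.sqrt k)⁻¹ *
    ∑ i ∈ Finset.univ.filter (fun i : Fin d => (j - 1) * k ≤ (i : ℕ) ∧ (i : ℕ) < j * k), w i

/-- The unit block vector `e_{I_j} = (1/√k) ∑_{i ∈ I_j} e_i`. -/
noncomputable def blockVec (d k : ℕ) (j : ℕ) : EuclideanSpace ℝ (Fin d) := WithLp.toLp 2 fun i =>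
  if (j - 1) * k ≤ (i : ℕ) ∧ (i : ℕ) < j * k then (Real.sqrt k)⁻¹ else 0

open scoped Classical in
/-- One step of the block dynamics with `D = d'/k` blocks: `w ↦ w − η·g` where
`g = α(e_{I_{j+1}} − e_{I_j})` for the least `1 ≤ j < D` with `w(I_j) = w(I_{j+1}) > ηα`
if one exists; otherwise `g = −α·e_{I_j}` for the least `1 ≤ j ≤ D` with `w(I_j) = 0` if one
exists; otherwise `g = 0`. -/
noncomputable def blockStep (d k D : ℕ) (η α : ℝ) (w : EuclideanSpace ℝ (Fin d)) :
    EuclideanSpace ℝ (Fin d) :=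
  if h1 : ∃ j, 1 ≤ j ∧ j < D ∧ blockVal d k w j = blockVal d k w (j + 1) ∧
      η * α < blockVal d k w j then
    w - η • (α • (blockVec d k (Nat.find h1 + 1) - blockVec d k (Nat.find h1)))
  else if h2 : ∃ j, 1 ≤ j ∧ j ≤ D ∧ blockVal d k w j = 0 then
    w - η • (-(α • blockVec d k (Nat.find h2)))
  else w

/-- The block-dynamics trajectory: `w_0 = 0`, `w_{t+1} = blockStep w_t`. -/
noncomputable def blockTraj (d k D : ℕ) (η α : ℝ) : ℕ → EuclideanSpace ℝ (Fin d)
  | 0 => 0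
  | t + 1 => blockStep d k D η α (blockTraj d k D η α t)

open scoped RealInnerProductSpace

lemma inner_blockVec (d k : ℕ) (w : EuclideanSpace ℝ (Fin d)) (j : ℕ) :
    ⟪w, blockVec d k j⟫ = blockVal d k w j := by
  simp only [blockVec, blockVal, PiLp.inner_apply, RCLike.inner_apply, starRingEnd_apply,
    star_trivial]
  rw [Finset.sum_filter, Finset.mul_sum]
  refine Finset.sum_congr rfl fun i _ => ?_
  by_cases h : (j - 1) * k ≤ (i : ℕ) ∧ (i : ℕ) < j * k <;> simp [h, mul_comm]

lemma norm_sq_blockVec_le (d k : ℕ) (hk : 1 ≤ k) (j : ℕ) :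
    ‖blockVec d k j‖ ^ 2 ≤ 1 := by
  rw [← real_inner_self_eq_norm_sq]
  simp only [blockVec, PiLp.inner_apply, RCLike.inner_apply, starRingEnd_apply, star_trivial]
  have : ∀ i : Fin d,
      (if (j - 1) * k ≤ (i : ℕ) ∧ (i : ℕ) < j * k then (Real.sqrt k)⁻¹ else 0) *
      (if (j - 1) * k ≤ (i : ℕ) ∧ (i : ℕ) < j * k then (Real.sqrt k)⁻¹ else 0) =
      if (j - 1) * k ≤ (i : ℕ) ∧ (i : ℕ) < j * k then ((k : ℝ))⁻¹ else 0 := by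
    intro i
    by_cases h : (j - 1) * k ≤ (i : ℕ) ∧ (i : ℕ) < j * k
    · simp [h, ← mul_inv, Real.mul_self_sqrt (by positivity : (0:ℝ) ≤ (k:ℝ))]
    · simp [h]
  simp only [this, Finset.sum_ite_eq', ← Finset.sum_filter]
  rw [Finset.sum_const, nsmul_eq_mul]
  have hcard : (Finset.univ.filter
      (fun i : Fin d => (j - 1) * k ≤ (i : ℕ) ∧ (i : ℕ) < j * k)).card ≤ k := by
    have : (Finset.univ.filter
        (fun i : Fin d => (j - 1) * k ≤ (i : ℕ) ∧ (i : ℕ) < j * k)).card ≤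
        (Finset.Ico ((j-1)*k) (j*k)).card := by
      apply Finset.card_le_card_of_injOn (f := fun i : Fin d => (i : ℕ))
      · intro i hi
        simp only [Finset.coe_filter, Finset.mem_filter, Finset.mem_univ, true_and, Set.mem_setOf_eq] at hi
        simpa [Finset.mem_Ico] using hi
      · intro a _ b _ h
        exact Fin.ext h
    refine this.trans ?_
    rw [Nat.card_Ico]
    rcases j with _ | j
    · simp
    · simp [Nat.succ_sub_one, add_mul]
  calc ((Finset.univ.filter
      (fun i : Fin d => (j - 1) * k ≤ (i : ℕ) ∧ (i : ℕ) < j * k)).card : ℝ) * (k:ℝ)⁻¹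
      ≤ (k : ℝ) * (k:ℝ)⁻¹ := by
        apply mul_le_mul_of_nonneg_right (by exact_mod_cast hcard) (by positivity)
    _ ≤ 1 := by
        rw [mul_inv_cancel₀ (by positivity : (k:ℝ) ≠ 0)]

lemma inner_blockVec_succ (d k : ℕ) (j : ℕ) :
    ⟪blockVec d k (j + 1), blockVec d k j⟫ = 0 := by
  simp only [blockVec, PiLp.inner_apply, RCLike.inner_apply, starRingEnd_apply, star_trivial]
  refine Finset.sum_eq_zero fun i _ => ?_
  rcases lt_or_ge (i : ℕ) (j * k) with h | h
  · have hcond : ¬ ((j + 1 - 1) * k ≤ (i : ℕ) ∧ (i : ℕ) < (j + 1) * k) := fun hc =>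
      absurd hc.1 (by simpa using not_le.mpr h)
    rw [if_neg hcond, mul_zero]
  · have hcond : ¬ ((j - 1) * k ≤ (i : ℕ) ∧ (i : ℕ) < j * k) := fun hc =>
      absurd hc.2 (not_lt.mpr h)
    rw [if_neg hcond, zero_mul]

lemma blockStep_norm_sq (d k D : ℕ) (hk : 1 ≤ k) (η α : ℝ)
    (w : EuclideanSpace ℝ (Fin d)) :
    ‖blockStep d k D η α w‖ ^ 2 ≤ ‖w‖ ^ 2 + 2 * η ^ 2 * α ^ 2 := by
  classical
  have hηα : 0 ≤ 2 * η ^ 2 * α ^ 2 := by positivity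
  unfold blockStep
  split_ifs with h1 h2
  · set j := Nat.find h1 with hj
    obtain ⟨-, -, heq, -⟩ := Nat.find_spec h1
    set g : EuclideanSpace ℝ (Fin d) :=
      η • (α • (blockVec d k (j + 1) - blockVec d k j)) with hg
    rw [norm_sub_sq_real]
    have hinner : ⟪w, g⟫ = 0 := by
      rw [hg, real_inner_smul_right, real_inner_smul_right, inner_sub_right,
        inner_blockVec, inner_blockVec, ← heq, sub_self, mul_zero, mul_zero]
    have hdiff : ‖blockVec d k (j + 1) - blockVec d k j‖ ^ 2 ≤ 2 := by
      rw [norm_sub_sq_real, inner_blockVec_succ]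
      have h1' := norm_sq_blockVec_le d k hk (j + 1)
      have h2' := norm_sq_blockVec_le d k hk j
      linarith
    have hng : ‖g‖ ^ 2 ≤ 2 * η ^ 2 * α ^ 2 := by
      have : ‖g‖ ^ 2 = η ^ 2 * α ^ 2 * ‖blockVec d k (j + 1) - blockVec d k j‖ ^ 2 := by
        rw [hg, norm_smul, norm_smul, mul_pow, mul_pow]
        simp only [Real.norm_eq_abs, sq_abs]
        ring
      rw [this]
      nlinarith [sq_nonneg η, sq_nonneg α, sq_nonneg (η * α)]
    linarith
  · set j := Nat.find h2 with hj
    obtain ⟨-, -, hzero⟩ := Nat.find_spec h2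
    set g : EuclideanSpace ℝ (Fin d) := η • (-(α • blockVec d k j)) with hg
    rw [norm_sub_sq_real]
    have hinner : ⟪w, g⟫ = 0 := by
      rw [hg, real_inner_smul_right, inner_neg_right, real_inner_smul_right,
        inner_blockVec, hzero, mul_zero, neg_zero, mul_zero]
    have hng : ‖g‖ ^ 2 ≤ 2 * η ^ 2 * α ^ 2 := by
      have : ‖g‖ ^ 2 = η ^ 2 * α ^ 2 * ‖blockVec d k j‖ ^ 2 := by
        rw [hg, norm_smul, norm_neg, norm_smul, mul_pow, mul_pow]
        simp only [Real.norm_eq_abs, sq_abs]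
        ring
      rw [this]
      have := norm_sq_blockVec_le d k hk j
      nlinarith [sq_nonneg η, sq_nonneg α, sq_nonneg (η * α), sq_nonneg ‖blockVec d k j‖]
    linarith
  · linarith


/-- Along the block dynamics, `‖w_t‖² ≤ 2η²α²·t` for every `t ≥ 1`.
In particular, if `α ≤ 1/(η√(2T))` then every iterate `w_t` with `t ≤ T` lies in the closed
unit ball (so projected gradient descent performs no projections up to time `T`). -/
theorem block_dynamics_norm_bound (d k d' : ℕ) (hk : 1 ≤ k) (hd' : d' ≤ d) (hdvd : k ∣ d')
    (η α : ℝ) (hη : 0 < η) (hα : 0 < α) (T : ℕ) :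
    (∀ t : ℕ, 1 ≤ t →
      ‖blockTraj d k (d' / k) η α t‖ ^ 2 ≤ 2 * η ^ 2 * α ^ 2 * (t : ℝ)) ∧
    (α ≤ 1 / (η * Real.sqrt (2 * (T : ℝ))) →
      ∀ t ≤ T, ‖blockTraj d k (d' / k) η α t‖ ≤ 1) := by
  have key : ∀ t : ℕ, ‖blockTraj d k (d' / k) η α t‖ ^ 2 ≤ 2 * η ^ 2 * α ^ 2 * (t : ℝ) := by
    intro t
    induction t with
    | zero => simp [blockTraj]
    | succ n ih =>
      have hstep := blockStep_norm_sq d k (d' / k) hk η α (blockTraj d k (d' / k) η α n)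
      have : ‖blockTraj d k (d' / k) η α (n + 1)‖ ^ 2
          ≤ 2 * η ^ 2 * α ^ 2 * (n : ℝ) + 2 * η ^ 2 * α ^ 2 := by
        calc ‖blockTraj d k (d' / k) η α (n + 1)‖ ^ 2
            = ‖blockStep d k (d' / k) η α (blockTraj d k (d' / k) η α n)‖ ^ 2 := rfl
          _ ≤ ‖blockTraj d k (d' / k) η α n‖ ^ 2 + 2 * η ^ 2 * α ^ 2 := hstep
          _ ≤ 2 * η ^ 2 * α ^ 2 * (n : ℝ) + 2 * η ^ 2 * α ^ 2 := by linarith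
      calc ‖blockTraj d k (d' / k) η α (n + 1)‖ ^ 2
          ≤ 2 * η ^ 2 * α ^ 2 * (n : ℝ) + 2 * η ^ 2 * α ^ 2 := this
        _ = 2 * η ^ 2 * α ^ 2 * ((n + 1 : ℕ) : ℝ) := by push_cast; ring
  refine ⟨fun t _ => key t, fun hαT t ht => ?_⟩
  rcases Nat.eq_zero_or_pos T with rfl | hT
  · exfalso
    have : Real.sqrt (2 * ((0 : ℕ) : ℝ)) = 0 := by norm_num
    rw [this, mul_zero, div_zero] at hαT
    linarith
  · have hTpos : (0 : ℝ) < (T : ℝ) := by exact_mod_cast hT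
    have h2T : (0 : ℝ) < 2 * (T : ℝ) := by linarith
    have hsqrt : (0 : ℝ) < Real.sqrt (2 * (T : ℝ)) := Real.sqrt_pos.mpr h2T
    have hα2 : α ^ 2 ≤ 1 / (η ^ 2 * (2 * (T : ℝ))) := by
      have h1 : α ^ 2 ≤ (1 / (η * Real.sqrt (2 * (T : ℝ)))) ^ 2 :=
        pow_le_pow_left₀ (le_of_lt hα) hαT 2
      have h2 : (1 / (η * Real.sqrt (2 * (T : ℝ)))) ^ 2 = 1 / (η ^ 2 * (2 * (T : ℝ))) := by
        rw [div_pow, mul_pow, Real.sq_sqrt (le_of_lt h2T)]; norm_num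
      linarith [h1, h2.le, h2.ge]
    have hsq : ‖blockTraj d k (d' / k) η α t‖ ^ 2 ≤ 1 := by
      have h1 := key t
      have hcast : (t : ℝ) ≤ (T : ℝ) := by exact_mod_cast ht
      have h2 : 2 * η ^ 2 * α ^ 2 * (t : ℝ) ≤ 2 * η ^ 2 * α ^ 2 * (T : ℝ) := by
        apply mul_le_mul_of_nonneg_left hcast (by positivity)
      have h3 : 2 * η ^ 2 * α ^ 2 * (T : ℝ) ≤ 2 * η ^ 2 * (1 / (η ^ 2 * (2 * (T : ℝ)))) * (T : ℝ) := by
        apply mul_le_mul_of_nonneg_right _ (le_of_lt hTpos)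
        apply mul_le_mul_of_nonneg_left hα2 (by positivity)
      have h4 : 2 * η ^ 2 * (1 / (η ^ 2 * (2 * (T : ℝ)))) * (T : ℝ) = 1 := by
        field_simp
      linarith
    have := pow_le_one_iff_of_nonneg (norm_nonneg (blockTraj d k (d' / k) η α t)) two_ne_zero
    exact this.mp hsq
end

section
/- Consider the block dynamics with parameters d, k, d', η, α. For an integer 1 ≤ B ≤ d define X_t(B) = max{ Σ_{i∈A} w_t(i) : A ⊆ {1,…,d}, |A| = B }. Then for every B, the sequence t ↦ X_t(B) is nondecreasing in t. Consequently, for every t ≤ T and every subset A of size B, Σ_{i∈A} w_t(i) ≤ max{ Σ_{i∈A'} w_T(i) : |A'| = B }. -/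
open scoped BigOperators

-- aux lemmas
lemma pj_iff {k : ℕ} (hk : 1 ≤ k) {j : ℕ} (hj : 1 ≤ j) (i : ℕ) :
    ((j - 1) * k ≤ i ∧ i < j * k) ↔ i / k = j - 1 := by
  obtain ⟨j', rfl⟩ : ∃ j', j = j' + 1 := ⟨j - 1, by omega⟩
  simp only [Nat.add_sub_cancel]
  rw [← Nat.le_div_iff_mul_le hk, ← Nat.div_lt_iff_lt_mul hk]
  omega

lemma blockVec_apply {d k : ℕ} (hk : 1 ≤ k) {j : ℕ} (hj : 1 ≤ j) (i : Fin d) :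
    blockVec d k j i = if (i : ℕ) / k = j - 1 then (Real.sqrt k)⁻¹ else 0 := by
  simp only [blockVec, PiLp.toLp_apply, pj_iff hk hj]

lemma blockTraj_const (d k D : ℕ) (hk : 1 ≤ k) (η α : ℝ) (t : ℕ) {i i' : Fin d}
    (h : (i : ℕ) / k = (i' : ℕ) / k) :
    blockTraj d k D η α t i = blockTraj d k D η α t i' := by
  classical
  induction t with
  | zero => rfl
  | succ t ih =>
    show blockStep d k D η α (blockTraj d k D η α t) i
        = blockStep d k D η α (blockTraj d k D η α t) i'
    set w := blockTraj d k D η α t with hw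
    unfold blockStep
    split_ifs with h1 h2
    · have hj1 : 1 ≤ Nat.find h1 := (Nat.find_spec h1).1
      simp only [PiLp.sub_apply, PiLp.smul_apply, smul_eq_mul,
        blockVec_apply hk hj1, blockVec_apply hk (Nat.le_add_left 1 (Nat.find h1)), h, ih]
    · have hj2 : 1 ≤ Nat.find h2 := (Nat.find_spec h2).1
      simp only [PiLp.sub_apply, PiLp.smul_apply, PiLp.neg_apply, smul_eq_mul,
        blockVec_apply hk hj2, h, ih]
    · exact ih

lemma card_block_filter (d a b : ℕ) (hb : b ≤ d) :
    (Finset.univ.filter fun i : Fin d => a ≤ (i : ℕ) ∧ (i : ℕ) < b).card = b - a := by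
  rw [show (Finset.univ.filter fun i : Fin d => a ≤ (i : ℕ) ∧ (i : ℕ) < b)
      = (Finset.Ico a b).attachFin
          (fun m hm => lt_of_lt_of_le (Finset.mem_Ico.1 hm).2 hb) from ?_,
    Finset.card_attachFin, Nat.card_Ico]
  ext i
  simp [Finset.mem_attachFin, Finset.mem_Ico]

lemma sum_ite_card {d : ℕ} (F : Finset (Fin d)) (p : Fin d → Prop) [DecidablePred p] (c : ℝ) :
    ∑ i ∈ F, (if p i then c else 0) = (F.filter p).card * c := by
  rw [← Finset.sum_filter, Finset.sum_const, nsmul_eq_mul]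

lemma step_key (d k d' : ℕ) (hk : 1 ≤ k) (hd' : d' ≤ d) (hdvd : k ∣ d')
    (η α : ℝ) (hη : 0 < η) (hα : 0 < α) (t : ℕ) (A : Finset (Fin d)) :
    ∃ A' : Finset (Fin d), A'.card = A.card ∧
      ∑ i ∈ A, blockTraj d k (d' / k) η α t i ≤
        ∑ i ∈ A', blockTraj d k (d' / k) η α (t + 1) i := by
  classical
  set D := d' / k with hD
  set w := blockTraj d k D η α t with hw
  have hDk : D * k = d' := Nat.div_mul_cancel hdvd
  have hk0 : (0 : ℝ) < Real.sqrt k := Real.sqrt_pos.2 (by exact_mod_cast hk)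
  by_cases h1 : ∃ j, 1 ≤ j ∧ j < D ∧ blockVal d k w j = blockVal d k w (j + 1) ∧
      η * α < blockVal d k w j
  · obtain ⟨hj1, hjD, hveq, hgt⟩ := Nat.find_spec h1
    have hstep : blockTraj d k D η α (t + 1)
        = w - η • (α • (blockVec d k (Nat.find h1 + 1) - blockVec d k (Nat.find h1))) := by
      show blockStep d k D η α w = _
      unfold blockStep
      rw [dif_pos h1]
    generalize hJ : Nat.find h1 = j at hstep hj1 hjD hveq hgt
    obtain ⟨c, hc⟩ : ∃ c : ℝ, c = η * (α * (Real.sqrt k)⁻¹) := ⟨_, rfl⟩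
    have hcpos : 0 < c := by rw [hc]; positivity
    obtain ⟨pj, hpj⟩ : ∃ p : Fin d → Prop, p = fun i : Fin d => (i : ℕ) / k = j - 1 := ⟨_, rfl⟩
    obtain ⟨pq, hpq⟩ : ∃ p : Fin d → Prop, p = fun i : Fin d => (i : ℕ) / k = j := ⟨_, rfl⟩
    have hne : ∀ i : Fin d, pj i → pq i → False := by
      simp only [hpj, hpq]
      intro i h h'
      omega
    have hptwise : ∀ i : Fin d, blockTraj d k D η α (t + 1) i
        = w i + (if pj i then c else 0) - (if pq i then c else 0) := by
      intro i
      rw [hstep]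
      simp only [PiLp.sub_apply, PiLp.smul_apply, smul_eq_mul,
        blockVec_apply hk hj1, blockVec_apply hk (Nat.le_add_left 1 j), Nat.add_sub_cancel,
        hpj, hpq, hc]
      by_cases h : (i : ℕ) / k = j - 1 <;> by_cases h' : (i : ℕ) / k = j
      · exact absurd (h.symm.trans h') (by omega)
      · simp only [if_pos h, if_neg h']; ring
      · simp only [if_neg h, if_pos h']; ring
      · simp only [if_neg h, if_neg h']; ring
    have hsum : ∀ F : Finset (Fin d), ∑ i ∈ F, blockTraj d k D η α (t + 1) i
        = ∑ i ∈ F, w i + (F.filter pj).card * c - (F.filter pq).card * c := by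
      intro F
      simp_rw [hptwise]
      rw [Finset.sum_sub_distrib, Finset.sum_add_distrib, sum_ite_card, sum_ite_card]
    by_cases hba : (Finset.filter pq A).card ≤ (Finset.filter pj A).card
    · refine ⟨A, rfl, ?_⟩
      rw [hsum A]
      have h1' : ((Finset.filter pq A).card : ℝ) * c ≤ ((Finset.filter pj A).card : ℝ) * c :=
        mul_le_mul_of_nonneg_right (by exact_mod_cast hba) hcpos.le
      linarith
    · push_neg at hba
      have hjk : j * k ≤ d :=
        le_trans (le_trans (Nat.mul_le_mul_right k hjD.le) hDk.le) hd'
      have hjk1 : (j + 1) * k ≤ d :=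
        le_trans (le_trans (Nat.mul_le_mul_right k hjD) hDk.le) hd'
      have hBjeq : Finset.univ.filter pj = Finset.univ.filter
          (fun i : Fin d => (j - 1) * k ≤ (i : ℕ) ∧ (i : ℕ) < j * k) := by
        ext i; simp [hpj, pj_iff hk hj1]
      have hBqeq : Finset.univ.filter pq = Finset.univ.filter
          (fun i : Fin d => j * k ≤ (i : ℕ) ∧ (i : ℕ) < (j + 1) * k) := by
        ext i
        have h2' := pj_iff hk (Nat.le_add_left 1 j) (i : ℕ)
        simp only [Nat.add_sub_cancel] at h2'
        simp [hpq, h2']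
      have hBjcard : (Finset.univ.filter pj).card = k := by
        rw [hBjeq, card_block_filter d _ _ hjk]
        obtain ⟨j', rfl⟩ : ∃ j', j = j' + 1 := ⟨j - 1, by omega⟩
        rw [Nat.add_sub_cancel, add_one_mul, Nat.add_sub_cancel_left]
      have hBqcard : (Finset.univ.filter pq).card = k := by
        rw [hBqeq, card_block_filter d _ _ hjk1, add_one_mul, Nat.add_sub_cancel_left]
      have hbk : (Finset.filter pq A).card ≤ k :=
        le_trans (Finset.card_le_card
          (Finset.filter_subset_filter pq (Finset.subset_univ A))) hBqcard.le
      obtain ⟨i0, hi0⟩ : (Finset.univ.filter pj).Nonempty := Finset.card_pos.1 (by omega)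
      have hi0p : pj i0 := (Finset.mem_filter.1 hi0).2
      have hvj : ∀ i : Fin d, pj i → w i = w i0 := by
        intro i hi
        refine blockTraj_const d k D hk η α t ?_
        rw [hpj] at hi hi0p
        rw [hi, hi0p]
      obtain ⟨i1, hi1⟩ : (Finset.univ.filter pq).Nonempty := Finset.card_pos.1 (by omega)
      have hi1p : pq i1 := (Finset.mem_filter.1 hi1).2
      have hvq' : ∀ i : Fin d, pq i → w i = w i1 := by
        intro i hi
        refine blockTraj_const d k D hk η α t ?_
        rw [hpq] at hi hi1p
        rw [hi, hi1p]
      have hval_j : blockVal d k w j = (Real.sqrt k)⁻¹ * (k * w i0) := by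
        rw [blockVal, ← hBjeq,
          Finset.sum_congr rfl (fun i hi => hvj i (Finset.mem_filter.1 hi).2),
          Finset.sum_const, hBjcard, nsmul_eq_mul]
      have hval_q : blockVal d k w (j + 1) = (Real.sqrt k)⁻¹ * (k * w i1) := by
        rw [blockVal]
        simp only [Nat.add_sub_cancel]
        rw [← hBqeq,
          Finset.sum_congr rfl (fun i hi => hvq' i (Finset.mem_filter.1 hi).2),
          Finset.sum_const, hBqcard, nsmul_eq_mul]
      have hv1 : w i1 = w i0 := by
        rw [hval_j, hval_q] at hveq
        have hkne : (k : ℝ) ≠ 0 := by positivity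
        have hsne : (Real.sqrt (k : ℕ))⁻¹ ≠ 0 := by positivity
        have h3' := mul_left_cancel₀ hsne hveq
        exact (mul_left_cancel₀ hkne h3').symm
      have hvq : ∀ i : Fin d, pq i → w i = w i0 := fun i hi => (hvq' i hi).trans hv1
      obtain ⟨S, hSsub, hScard⟩ := Finset.exists_subset_card_eq (s := A.filter pq)
        (n := (Finset.filter pq A).card - (Finset.filter pj A).card) (by omega)
      have hSA : S ⊆ A := hSsub.trans (Finset.filter_subset pq A)
      have hBjA : ((Finset.univ.filter pj) \ A).card + (Finset.filter pj A).card = k := by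
        have h1' : (Finset.univ.filter pj) ∩ A = A.filter pj := by
          ext i; simp [Finset.mem_filter, and_comm]
        have h2' := Finset.card_sdiff_add_card_inter (Finset.univ.filter pj) A
        rw [h1', hBjcard] at h2'
        exact h2'
      have hak : (Finset.filter pj A).card ≤ k := by omega
      obtain ⟨T, hTsub, hTcard⟩ := Finset.exists_subset_card_eq (s := (Finset.univ.filter pj) \ A)
        (n := (Finset.filter pq A).card - (Finset.filter pj A).card) (by omega)
      have hdisj : Disjoint (A \ S) T := by
        rw [Finset.disjoint_right]
        intro i hiT hiAS
        exact (Finset.mem_sdiff.1 (hTsub hiT)).2 (Finset.mem_sdiff.1 hiAS).1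
      refine ⟨(A \ S) ∪ T, ?_, ?_⟩
      · rw [Finset.card_union_of_disjoint hdisj, Finset.card_sdiff_of_subset hSA, hScard, hTcard]
        have hbA : (Finset.filter pq A).card ≤ A.card :=
          Finset.card_le_card (Finset.filter_subset pq A)
        omega
      · have hSpq : ∀ i ∈ S, pq i := fun i hi => (Finset.mem_filter.1 (hSsub hi)).2
        have hSnpj : ∀ i ∈ S, ¬ pj i := fun i hi h => hne i h (hSpq i hi)
        have hTpj : ∀ i ∈ T, pj i := fun i hi =>
          (Finset.mem_filter.1 (Finset.mem_sdiff.1 (hTsub hi)).1).2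
        have hTnpq : ∀ i ∈ T, ¬ pq i := fun i hi h => hne i (hTpj i hi) h
        rw [Finset.sum_union hdisj, hsum (A \ S)]
        have hSumT : ∑ i ∈ T, blockTraj d k D η α (t + 1) i
            = (((Finset.filter pq A).card - (Finset.filter pj A).card : ℕ) : ℝ)
                * (w i0 + c) := by
          have h3' : ∀ i ∈ T, blockTraj d k D η α (t + 1) i = w i0 + c := by
            intro i hi
            rw [hptwise i, if_pos (hTpj i hi), if_neg (hTnpq i hi), hvj i (hTpj i hi)]
            ring
          rw [Finset.sum_congr rfl h3', Finset.sum_const, hTcard, nsmul_eq_mul]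
        have hSumS : ∑ i ∈ S, w i
            = (((Finset.filter pq A).card - (Finset.filter pj A).card : ℕ) : ℝ) * w i0 := by
          have h3' : ∀ i ∈ S, w i = w i0 := fun i hi => hvq i (hSpq i hi)
          rw [Finset.sum_congr rfl h3', Finset.sum_const, hScard, nsmul_eq_mul]
        have hSplit : ∑ i ∈ A, w i = ∑ i ∈ A \ S, w i + ∑ i ∈ S, w i :=
          (Finset.sum_sdiff hSA).symm
        have hfj : ((A \ S).filter pj).card = (A.filter pj).card := by
          congr 1
          ext i
          simp only [Finset.mem_filter, Finset.mem_sdiff]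
          constructor
          · rintro ⟨⟨h1', _⟩, h3⟩; exact ⟨h1', h3⟩
          · rintro ⟨h1', h3⟩; exact ⟨⟨h1', fun hS => hSnpj i hS h3⟩, h3⟩
        have hfq : ((A \ S).filter pq).card = (Finset.filter pj A).card := by
          have hset : (A \ S).filter pq = (A.filter pq) \ S := by
            ext i
            simp only [Finset.mem_filter, Finset.mem_sdiff]
            tauto
          rw [hset, Finset.card_sdiff_of_subset hSsub, hScard]
          omega
        rw [hfj, hfq, hSumT, hSplit, hSumS]
        have hm0 : (0 : ℝ) ≤
            (((Finset.filter pq A).card - (Finset.filter pj A).card : ℕ) : ℝ) :=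
          Nat.cast_nonneg _
        nlinarith [mul_nonneg hm0 hcpos.le]
  · by_cases h2 : ∃ j, 1 ≤ j ∧ j ≤ D ∧ blockVal d k w j = 0
    · have hstep : blockTraj d k D η α (t + 1)
          = w - η • (-(α • blockVec d k (Nat.find h2))) := by
        show blockStep d k D η α w = _
        unfold blockStep
        rw [dif_neg h1, dif_pos h2]
      refine ⟨A, rfl, Finset.sum_le_sum fun i _ => ?_⟩
      rw [hstep]
      simp only [PiLp.sub_apply, PiLp.smul_apply, PiLp.neg_apply, smul_eq_mul]
      have hv0 : 0 ≤ blockVec d k (Nat.find h2) i := by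
        rw [blockVec]
        dsimp only
        split
        · positivity
        · exact le_refl 0
      have h3' : 0 ≤ η * (α * blockVec d k (Nat.find h2) i) :=
        mul_nonneg hη.le (mul_nonneg hα.le hv0)
      linarith
    · have hstep : blockTraj d k D η α (t + 1) = w := by
        show blockStep d k D η α w = _
        unfold blockStep
        rw [dif_neg h1, dif_neg h2]
      exact ⟨A, rfl, by rw [hstep]⟩

/-- For `1 ≤ B ≤ d`, the quantity
`X_t(B) = max{∑_{i∈A} w_t(i) : A ⊆ [d], |A| = B}` is nondecreasing in `t` along the block
dynamics; consequently for every `t ≤ T` and every `A` of size `B`,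
`∑_{i∈A} w_t(i) ≤ max{∑_{i∈A'} w_T(i) : |A'| = B}`. -/
theorem block_dynamics_top_sum_monotone (d k d' : ℕ) (hk : 1 ≤ k) (hd' : d' ≤ d)
    (hdvd : k ∣ d') (η α : ℝ) (hη : 0 < η) (hα : 0 < α)
    (B : ℕ) (hB1 : 1 ≤ B) (hBd : B ≤ d) :
    (∀ t : ℕ,
      sSup {x : ℝ | ∃ A : Finset (Fin d), A.card = B ∧
          x = ∑ i ∈ A, blockTraj d k (d' / k) η α t i} ≤
        sSup {x : ℝ | ∃ A : Finset (Fin d), A.card = B ∧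
          x = ∑ i ∈ A, blockTraj d k (d' / k) η α (t + 1) i}) ∧
    (∀ t T : ℕ, t ≤ T → ∀ A : Finset (Fin d), A.card = B →
      ∑ i ∈ A, blockTraj d k (d' / k) η α t i ≤
        sSup {x : ℝ | ∃ A' : Finset (Fin d), A'.card = B ∧
          x = ∑ i ∈ A', blockTraj d k (d' / k) η α T i}) := by
  classical
  have hbdd : ∀ t : ℕ, BddAbove {x : ℝ | ∃ A : Finset (Fin d), A.card = B ∧
      x = ∑ i ∈ A, blockTraj d k (d' / k) η α t i} := by
    intro t
    apply Set.Finite.bddAbove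
    apply Set.Finite.subset (Set.finite_range (fun A : Finset (Fin d) =>
      ∑ i ∈ A, blockTraj d k (d' / k) η α t i))
    rintro x ⟨A, _, rfl⟩
    exact ⟨A, rfl⟩
  obtain ⟨A0, _, hA0⟩ := Finset.exists_subset_card_eq (s := (Finset.univ : Finset (Fin d))) (n := B)
    (by simpa using hBd)
  have hne : ∀ t : ℕ, Set.Nonempty {x : ℝ | ∃ A : Finset (Fin d), A.card = B ∧
      x = ∑ i ∈ A, blockTraj d k (d' / k) η α t i} := fun t =>
    ⟨∑ i ∈ A0, blockTraj d k (d' / k) η α t i, A0, hA0, rfl⟩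
  have mono : ∀ t : ℕ,
      sSup {x : ℝ | ∃ A : Finset (Fin d), A.card = B ∧
          x = ∑ i ∈ A, blockTraj d k (d' / k) η α t i} ≤
        sSup {x : ℝ | ∃ A : Finset (Fin d), A.card = B ∧
          x = ∑ i ∈ A, blockTraj d k (d' / k) η α (t + 1) i} := by
    intro t
    apply csSup_le (hne t)
    rintro x ⟨A, hA, rfl⟩
    obtain ⟨A', hA', hle⟩ := step_key d k d' hk hd' hdvd η α hη hα t A
    exact hle.trans (le_csSup (hbdd (t + 1)) ⟨A', by rw [hA', hA], rfl⟩)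
  refine ⟨mono, ?_⟩
  intro t T hT A hA
  induction T, hT using Nat.le_induction with
  | base => exact le_csSup (hbdd t) ⟨A, hA, rfl⟩
  | succ T hT ih => exact ih.trans (mono T)
end
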